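/- arXiv:2311.01915 — 9 statements merged into one kernel-verified Lean document; each statement's English description precedes it below -/
import Mathlib

section
/- (Gradient estimate) Let G=(V,E) be a graph, X ⊂ V, Y = V∖X, and u: V → ℝ a bounded function satisfying Δ∞u(x) = f(x) for all x ∈ X, where f is bounded above. Then for every x ∈ X, every neighbor y of x, and every natural number N with N ≤ d(Y,x) (the combinatorial distance from x to Y), one has u(y) − u(x) ≤ (u(x) − inf_V u)/N + (N+1)·(sup f)/2. -/
/-- The discrete infinity Laplacian on a graph. -/
noncomputable def infLap {V : Type*} (G : SimpleGraph V) (u : V → ℝ) (x : V) : ℝ :=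
  sInf (u '' {y | G.Adj x y}) + sSup (u '' {y | G.Adj x y}) - 2 * u x

/-- Gradient estimate: if `u` is a bounded solution of `Δ∞ u = f` on `X`, `f` bounded above,
then for `x ∈ X`, any neighbor `y` of `x`, and any `1 ≤ N` with `N ≤ d(V∖X, x)`
(expressed by: every walk from `x` to the complement of `X` has length at least `N`),
`u y - u x ≤ (u x - inf u)/N + (N+1) * sup_X f / 2`. -/
theorem stmt_1 {V : Type*} (G : SimpleGraph V) (X : Set V) (u f : V → ℝ)
    (hub : ∃ C, ∀ x, |u x| ≤ C)
    (hfbdd : BddAbove (f '' X))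
    (heq : ∀ x ∈ X, infLap G u x = f x) :
    ∀ x ∈ X, ∀ y, G.Adj x y → ∀ N : ℕ, 1 ≤ N →
      (∀ z ∈ Xᶜ, ∀ w : G.Walk x z, N ≤ w.length) →
      u y - u x ≤ (u x - sInf (Set.range u)) / N + (N + 1) * sSup (f '' X) / 2 := by
  obtain ⟨C, hC⟩ := hub
  have hbddA : ∀ S : Set V, BddAbove (u '' S) := fun S =>
    ⟨C, by rintro _ ⟨z, _, rfl⟩; exact (abs_le.1 (hC z)).2⟩
  have hbddB : ∀ S : Set V, BddBelow (u '' S) := fun S =>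
    ⟨-C, by rintro _ ⟨z, _, rfl⟩; exact (abs_le.1 (hC z)).1⟩
  have hbddR : BddBelow (Set.range u) := ⟨-C, by rintro _ ⟨z, rfl⟩; exact (abs_le.1 (hC z)).1⟩
  intro x hx y hxy N hN hwalk
  set M := sSup (f '' X) with hM
  set a := u y - u x with ha
  set I := sInf (Set.range u) with hI
  have hN0 : (0:ℝ) < (N:ℝ) := by exact_mod_cast Nat.pos_of_ne_zero (by omega)
  have main : ∀ ε : ℝ, 0 < ε → a ≤ (u x - I) / N + (N + 1) * (M + ε) / 2 := by
    intro ε hε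
    have key : ∀ k : ℕ, k ≤ N → ∃ z : V, (∃ w : G.Walk x z, w.length = k) ∧
        (∃ t, G.Adj z t) ∧
        (k : ℝ) * a - ((k : ℝ) * ((k : ℝ) + 1) / 2) * (M + ε) ≤ u x - u z ∧
        a - (k : ℝ) * (M + ε) ≤ sSup (u '' {t | G.Adj z t}) - u z := by
      intro k
      induction k with
      | zero =>
        intro _
        refine ⟨x, ⟨SimpleGraph.Walk.nil, rfl⟩, ⟨y, hxy⟩, by simp, ?_⟩
        have hyle : u y ≤ sSup (u '' {t | G.Adj x t}) := le_csSup (hbddA _) ⟨y, hxy, rfl⟩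
        simp only [Nat.cast_zero, zero_mul, sub_zero]
        linarith
      | succ k ih =>
        intro hk
        obtain ⟨z, ⟨w, hw⟩, ⟨t, ht⟩, h1, h2⟩ := ih (Nat.le_of_succ_le hk)
        have hzX : z ∈ X := by
          by_contra hz
          have := hwalk z hz w
          omega
        have heqz := heq z hzX
        unfold infLap at heqz
        have hfz : f z ≤ M := le_csSup hfbdd ⟨z, hzX, rfl⟩
        have hne : (u '' {t' | G.Adj z t'}).Nonempty := ⟨u t, t, ht, rfl⟩
        have hlt : sInf (u '' {t' | G.Adj z t'}) < sInf (u '' {t' | G.Adj z t'}) + ε := by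
          linarith
        obtain ⟨b, ⟨z', hz', rfl⟩, hb⟩ := (csInf_lt_iff (hbddB _) hne).1 hlt
        have hstep : a - ((k : ℝ) + 1) * (M + ε) ≤ u z - u z' := by nlinarith
        refine ⟨z', ⟨w.concat hz', by simp [hw]⟩, ⟨z, G.adj_symm hz'⟩, ?_, ?_⟩
        · push_cast
          nlinarith
        · have hzle : u z ≤ sSup (u '' {t' | G.Adj z' t'}) :=
            le_csSup (hbddA _) ⟨z, G.adj_symm hz', rfl⟩
          push_cast
          linarith
    obtain ⟨z, ⟨w, hw⟩, _, h1, _⟩ := key N le_rfl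
    have hIz : I ≤ u z := csInf_le hbddR ⟨z, rfl⟩
    rw [div_add' _ _ _ (ne_of_gt hN0), le_div_iff₀ hN0]
    nlinarith
  refine le_of_forall_pos_le_add fun δ hδ => ?_
  have hN1 : (0:ℝ) < (N:ℝ) + 1 := by linarith
  have := main (2 * δ / ((N:ℝ) + 1)) (by positivity)
  have heq2 : (u x - I) / N + ((N:ℝ) + 1) * (M + 2 * δ / ((N:ℝ) + 1)) / 2
      = (u x - I) / N + ((N:ℝ) + 1) * M / 2 + δ := by
    field_simp
    ring
  linarith [this, heq2.le]
end

section
/- (Uniqueness) Let G=(V,E) be a graph, X ⊂ V with width(X) < ∞, f: X → ℝ bounded with f ≥ 0 (or f ≤ 0), and g: V∖X → ℝ bounded. If u and v are bounded functions on V satisfying Δ∞u = f = Δ∞v on X and u = g = v on V∖X, then u = v. -/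
lemma infLap_neg_aux {V : Type*} (G : SimpleGraph V) (u : V → ℝ) (x : V) :
    infLap G (fun y => -u y) x = - infLap G u x := by
  unfold infLap
  have him : (fun y => -u y) '' {y | G.Adj x y} = -(u '' {y | G.Adj x y}) := by
    ext t
    simp only [Set.mem_neg, Set.mem_image, Set.mem_setOf_eq]
    constructor
    · rintro ⟨y, hy, rfl⟩; exact ⟨y, hy, by ring⟩
    · rintro ⟨y, hy, hyt⟩; exact ⟨y, hy, by linarith⟩
  rw [him]
  have h1 : sInf (-(u '' {y | G.Adj x y})) = -sSup (u '' {y | G.Adj x y}) := by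
    rw [Real.sInf_def, neg_neg]
  have h2 : sSup (-(u '' {y | G.Adj x y})) = -sInf (u '' {y | G.Adj x y}) := by
    rw [Real.sInf_def, neg_neg]
  rw [h1, h2]; ring

lemma claimA_aux {V : Type*} (G : SimpleGraph V) (X : Set V) (u v : V → ℝ)
    (z : V)
    (C : ℝ) (hC : ∀ x, |u x| ≤ C)
    (δ : ℝ) (hδ : 0 < δ)
    (hle : ∀ y, u y - v y ≤ δ)
    (hX : ∀ y, 0 < u y - v y → y ∈ X)
    (hIu : ∀ x y, G.Adj x y → sInf (u '' {w | G.Adj x w}) ≤ u y)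
    (hSv : ∀ x y, G.Adj x y → v y ≤ sSup (v '' {w | G.Adj x w}))
    (hnb : ∀ x ∈ X, u x ≠ v x → {y | G.Adj x y}.Nonempty)
    (hsum : ∀ x ∈ X,
      sInf (u '' {y | G.Adj x y}) + sSup (u '' {y | G.Adj x y}) - 2 * u x
        = sInf (v '' {y | G.Adj x y}) + sSup (v '' {y | G.Adj x y}) - 2 * v x)
    (hfpos : ∀ x ∈ X,
      0 ≤ sInf (u '' {y | G.Adj x y}) + sSup (u '' {y | G.Adj x y}) - 2 * u x)
    (hIdiff : ∀ x : V, {y | G.Adj x y}.Nonempty →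
      sInf (u '' {y | G.Adj x y}) ≤ sInf (v '' {y | G.Adj x y}) + δ) :
    ∀ ε' > 0, ∃ ε > 0, ε < δ ∧ ∀ y ∈ X, δ - ε < u y - v y →
      sSup (u '' {w | G.Adj y w}) - u y < ε' := by
  intro ε' hε'
  have hC0 : 0 ≤ C := le_trans (abs_nonneg _) (hC z)
  set N : ℕ := ⌈4 * C / ε'⌉₊ with hN
  set ε : ℝ := min (ε' / (2 * ((N : ℝ) + 1))) (δ / 4 ^ (N + 3)) with hεdef
  have hNpos : (0:ℝ) < (N : ℝ) + 1 := by positivity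
  have hεpos : 0 < ε := lt_min (by positivity) (by positivity)
  have hε1 : ε ≤ ε' / (2 * ((N : ℝ) + 1)) := min_le_left _ _
  have hε2 : ε ≤ δ / 4 ^ (N + 3) := min_le_right _ _
  have hεδ : ε < δ := lt_of_le_of_lt hε2 (div_lt_self hδ (one_lt_pow₀ (by norm_num) (by omega)))
  refine ⟨ε, hεpos, hεδ, ?_⟩
  intro y hy hcl
  by_contra hscon
  push_neg at hscon
  set s : ℝ := sSup (u '' {w | G.Adj y w}) - u y with hsdef
  -- bound on powers times ε
  have hpow : ∀ k : ℕ, k ≤ N + 3 → (4:ℝ) ^ k * ε ≤ δ := by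
    intro k hk
    have h1 : (4:ℝ) ^ k ≤ 4 ^ (N + 3) := pow_le_pow_right₀ (by norm_num) hk
    have h2 : (4:ℝ) ^ (N + 3) * ε ≤ δ := by
      rw [← le_div_iff₀' (by positivity)]
      exact hε2
    have := mul_le_mul_of_nonneg_right h1 hεpos.le
    linarith
  -- the steep chain
  have chain : ∀ k : ℕ, k ≤ N → ∃ a b : V, G.Adj a b ∧ a ∈ X ∧
      δ - 4 ^ (k + 1) * ε < u a - v a ∧
      δ - 4 ^ (k + 2) * ε < u b - v b ∧
      s - ((k : ℝ) + 1) * ε ≤ u b - u a ∧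
      u y + ((k : ℝ) + 1) * s - ((k : ℝ) + 1) ^ 2 * ε ≤ u b := by
    intro k
    induction k with
    | zero =>
      intro _
      have huvy : 0 < u y - v y := by linarith
      have hne : {w | G.Adj y w}.Nonempty := by
        apply hnb y hy
        intro h
        rw [h, sub_self] at huvy; exact lt_irrefl 0 huvy
      obtain ⟨t, htmem, ht⟩ := exists_lt_of_lt_csSup (hne.image u)
        (show sSup (u '' {w | G.Adj y w}) - ε < sSup (u '' {w | G.Adj y w}) by linarith)
      obtain ⟨b, hb, rfl⟩ := htmem
      have hb' : G.Adj y b := hb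
      have hvb := hSv y b hb'
      have h1 := hsum y hy
      have h2 := hIdiff y hne
      refine ⟨y, b, hb', hy, ?_, ?_, ?_, ?_⟩
      · have h4 : (4:ℝ) ^ (0 + 1) = 4 := by norm_num
        rw [h4]; linarith
      · have h4 : (4:ℝ) ^ (0 + 2) = 16 := by norm_num
        rw [h4]; linarith
      · push_cast; linarith
      · push_cast; nlinarith [hεpos]
    | succ k ih =>
      intro hk1
      obtain ⟨a, b, hab, haX, hca, hcb, hst, hcum⟩ := ih (by omega)
      have hk2δ : (4:ℝ) ^ (k + 2) * ε ≤ δ := hpow (k + 2) (by omega)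
      have hbX : b ∈ X := hX b (by linarith)
      have hnb' : {w | G.Adj b w}.Nonempty := ⟨a, hab.symm⟩
      obtain ⟨t, htmem, ht⟩ := exists_lt_of_lt_csSup (hnb'.image u)
        (show sSup (u '' {w | G.Adj b w}) - ε < sSup (u '' {w | G.Adj b w}) by linarith)
      obtain ⟨c, hc, rfl⟩ := htmem
      have hc' : G.Adj b c := hc
      have h1 := hsum b hbX
      have h2 := hIdiff b hnb'
      have h3 := hfpos b hbX
      have h4 := hIu b a hab.symm
      have h5 := hSv b c hc'
      have h6 := hle b
      have hps : (4:ℝ) ^ (k + 3) = 4 ^ (k + 2) * 4 := by rw [← pow_succ]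
      have h41 : (1:ℝ) ≤ (4:ℝ) ^ (k + 2) := one_le_pow₀ (by norm_num)
      have hstep : s - ((k : ℝ) + 2) * ε ≤ u c - u b := by linarith
      refine ⟨b, c, hc', hbX, ?_, ?_, ?_, ?_⟩
      · have he : k + 1 + 1 = k + 2 := by omega
        rw [he]; exact hcb
      · have he : k + 1 + 2 = k + 3 := by omega
        rw [he, hps]
        have hmul : (2 * (4:ℝ)^(k+2) + 1) * ε ≤ 4^(k+2) * 4 * ε :=
          mul_le_mul_of_nonneg_right (by linarith [h41]) hεpos.le
        linarith [hmul, ht, h5, h1, h2, hcb]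
      · push_cast; linarith
      · push_cast
        have hkr : (0:ℝ) ≤ (k : ℝ) := Nat.cast_nonneg k
        nlinarith [hεpos, hcum, hstep]
  -- final contradiction: u would exceed its bound
  obtain ⟨a, b, _, _, _, _, _, hcum⟩ := chain N le_rfl
  have hub := (abs_le.1 (hC b)).2
  have huy := (abs_le.1 (hC y)).1
  have h5 : ((N:ℝ) + 1) * ε ≤ ε' / 2 := by
    have hh := mul_le_mul_of_nonneg_left hε1 hNpos.le
    calc ((N:ℝ) + 1) * ε ≤ ((N:ℝ) + 1) * (ε' / (2 * ((N : ℝ) + 1))) := hh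
      _ = ε' / 2 := by field_simp
  have h4C : 4 * C ≤ (N : ℝ) * ε' := (div_le_iff₀ hε').mp (Nat.le_ceil _)
  have p1 : ((N:ℝ)+1) * ε' ≤ ((N:ℝ)+1) * s := mul_le_mul_of_nonneg_left hscon hNpos.le
  have p2 : ((N:ℝ)+1)^2 * ε ≤ ((N:ℝ)+1) * (ε'/2) := by nlinarith [h5, hNpos]
  linarith [p1, p2, hcum, hub, huy, hε', h4C]

lemma walk_aux {V : Type*} (G : SimpleGraph V) (X : Set V) (u v : V → ℝ)
    (z : V)
    (W : ℕ) (hW : ∀ x ∈ X, ∃ y ∈ Xᶜ, ∃ w : G.Walk x y, w.length ≤ W)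
    (δ : ℝ) (hδ : 0 < δ)
    (hδdef : δ = sSup (Set.range fun x => u x - v x))
    (hle : ∀ y, u y - v y ≤ δ)
    (hzero : ∀ y ∈ Xᶜ, u y - v y = 0)
    (hX : ∀ y, 0 < u y - v y → y ∈ X)
    (hIu : ∀ x y, G.Adj x y → sInf (u '' {w | G.Adj x w}) ≤ u y)
    (hSv : ∀ x y, G.Adj x y → v y ≤ sSup (v '' {w | G.Adj x w}))
    (hsum : ∀ x ∈ X,
      sInf (u '' {y | G.Adj x y}) + sSup (u '' {y | G.Adj x y}) - 2 * u x
        = sInf (v '' {y | G.Adj x y}) + sSup (v '' {y | G.Adj x y}) - 2 * v x)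
    (hfpos : ∀ x ∈ X,
      0 ≤ sInf (u '' {y | G.Adj x y}) + sSup (u '' {y | G.Adj x y}) - 2 * u x)
    (hIdiff : ∀ x : V, {y | G.Adj x y}.Nonempty →
      sInf (u '' {y | G.Adj x y}) ≤ sInf (v '' {y | G.Adj x y}) + δ)
    (claimA : ∀ ε' > 0, ∃ ε > 0, ε < δ ∧ ∀ y ∈ X, δ - ε < u y - v y →
      sSup (u '' {w | G.Adj y w}) - u y < ε') :
    False := by
  classical
  haveI : Nonempty V := ⟨z⟩
  set E : ℝ → ℝ := fun t => if h : 0 < t then (claimA t h).choose else 1 with hEdef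
  have hE : ∀ t, 0 < t → 0 < E t ∧ E t < δ ∧ ∀ y ∈ X, δ - E t < u y - v y →
      sSup (u '' {w | G.Adj y w}) - u y < t := by
    intro t ht
    have hspec := (claimA t ht).choose_spec
    obtain ⟨h1, h2, h3⟩ := hspec
    rw [hEdef]
    simp only [dif_pos ht]
    exact ⟨h1, h2, h3⟩
  -- the decreasing scale sequence
  set g : ℕ → ℝ := fun n => Nat.rec δ (fun _ ih => min (E (ih / 8)) (ih / 8)) n with hgdef
  have hg0 : g 0 = δ := rfl
  have hgs : ∀ n, g (n + 1) = min (E (g n / 8)) (g n / 8) := fun n => rfl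
  have hgpos : ∀ n, 0 < g n := by
    intro n
    induction n with
    | zero => exact hδ
    | succ n ih =>
      rw [hgs]
      exact lt_min (hE _ (by positivity)).1 (by positivity)
  have hgdec : ∀ n, g (n + 1) ≤ g n / 8 := fun n => by rw [hgs]; exact min_le_right _ _
  have hganti : ∀ m n, m ≤ n → g n ≤ g m := by
    have h : ∀ n, g (n + 1) ≤ g n := fun n => (hgdec n).trans (by linarith [hgpos n])
    exact fun m n hmn => (antitone_nat_of_succ_le h) hmn
  have hglt : ∀ n, g (n + 1) < δ := fun n => lt_of_le_of_lt (hgdec n)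
    (by have h1 := hgpos n; have h2 := hganti 0 n (Nat.zero_le n); rw [hg0] at h2; linarith)
  -- propagation of near-maximality along walks to the boundary
  have walkcl : ∀ (b a : V) (w : G.Walk a b), b ∈ Xᶜ → δ - g w.length < u a - v a → False := by
    intro b a w
    induction w with
    | nil =>
      intro hb hlt
      rw [SimpleGraph.Walk.length_nil, hg0] at hlt
      rw [hzero _ hb] at hlt
      linarith
    | @cons a c b hadj p ih =>
      intro hb hlt
      rw [SimpleGraph.Walk.length_cons] at hlt
      have haX : a ∈ X := hX a (by linarith [hglt p.length])
      have hEt := hE (g p.length / 8) (by linarith [hgpos p.length])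
      have hflat : sSup (u '' {w | G.Adj a w}) - u a < g p.length / 8 := by
        apply hEt.2.2 a haX
        have h : g (p.length + 1) ≤ E (g p.length / 8) := by rw [hgs]; exact min_le_left _ _
        linarith
      have hne : {w | G.Adj a w}.Nonempty := ⟨c, hadj⟩
      have h1 := hsum a haX
      have h2 := hIdiff a hne
      have h3 := hfpos a haX
      have h4 := hIu a c hadj
      have h5 := hSv a c hadj
      have h6 := hle a
      have h7 := hgdec p.length
      have hnext : δ - g p.length < u c - v c := by linarith
      exact ih hb hnext
  -- kick off from a near-maximal point of u - v
  obtain ⟨r, hrmem, hr⟩ := exists_lt_of_lt_csSup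
    (Set.range_nonempty (f := fun x => u x - v x))
    (show δ - g (W + 1) < sSup (Set.range fun x => u x - v x) by
      rw [← hδdef]; linarith [hgpos (W + 1), hglt W])
  obtain ⟨x, rfl⟩ := hrmem
  have hr' : δ - g (W + 1) < u x - v x := hr
  have hxX : x ∈ X := hX x (by linarith [hglt W])
  obtain ⟨y, hy, w, hlen⟩ := hW x hxX
  exact walkcl y x w hy (by linarith [hganti w.length (W + 1) (by omega), hr'])

lemma key_aux {V : Type*} (G : SimpleGraph V) (X : Set V) (f u v : V → ℝ)
    (hwidth : ∃ W : ℕ, ∀ x ∈ X, ∃ y ∈ Xᶜ, ∃ w : G.Walk x y, w.length ≤ W)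
    (hsign : ∀ x ∈ X, 0 ≤ f x)
    (hubdd : ∃ C, ∀ x, |u x| ≤ C) (hvbdd : ∃ C, ∀ x, |v x| ≤ C)
    (hueq : ∀ x ∈ X, infLap G u x = f x)
    (hveq : ∀ x ∈ X, infLap G v x = f x)
    (huv : ∀ x ∈ Xᶜ, u x = v x) :
    ∀ x, u x ≤ v x := by

  classical
  by_contra hcon
  push_neg at hcon
  obtain ⟨z, hz⟩ := hcon
  haveI : Nonempty V := ⟨z⟩
  obtain ⟨W, hW⟩ := hwidth
  obtain ⟨C, hC⟩ := hubdd
  obtain ⟨D, hD⟩ := hvbdd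
  -- basic facts
  have hBdd : BddAbove (Set.range fun x => u x - v x) := by
    refine ⟨C + D, ?_⟩
    rintro _ ⟨x, rfl⟩
    have h1 := abs_le.1 (hC x); have h2 := abs_le.1 (hD x)
    simp only
    linarith [h1.1, h1.2, h2.1, h2.2]
  set δ : ℝ := sSup (Set.range fun x => u x - v x) with hδdef
  have hle : ∀ y, u y - v y ≤ δ := fun y => le_csSup hBdd ⟨y, rfl⟩
  have hδ : 0 < δ := lt_of_lt_of_le (sub_pos.2 hz) (hle z)
  have hzero : ∀ y ∈ Xᶜ, u y - v y = 0 := fun y hy => by rw [huv y hy]; ring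
  have hX : ∀ y, 0 < u y - v y → y ∈ X := by
    intro y hy
    by_contra h
    rw [hzero y h] at hy; exact lt_irrefl 0 hy
  -- images bounded
  have bAu : ∀ x : V, BddAbove (u '' {y | G.Adj x y}) := by
    intro x; exact ⟨C, by rintro _ ⟨y, _, rfl⟩; exact (abs_le.1 (hC y)).2⟩
  have bBu : ∀ x : V, BddBelow (u '' {y | G.Adj x y}) := by
    intro x; exact ⟨-C, by rintro _ ⟨y, _, rfl⟩; exact (abs_le.1 (hC y)).1⟩
  have bAv : ∀ x : V, BddAbove (v '' {y | G.Adj x y}) := by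
    intro x; exact ⟨D, by rintro _ ⟨y, _, rfl⟩; exact (abs_le.1 (hD y)).2⟩
  have hSu : ∀ x y, G.Adj x y → u y ≤ sSup (u '' {w | G.Adj x w}) :=
    fun x y hy => le_csSup (bAu x) ⟨y, hy, rfl⟩
  have hIu : ∀ x y, G.Adj x y → sInf (u '' {w | G.Adj x w}) ≤ u y :=
    fun x y hy => csInf_le (bBu x) ⟨y, hy, rfl⟩
  have hSv : ∀ x y, G.Adj x y → v y ≤ sSup (v '' {w | G.Adj x w}) :=
    fun x y hy => le_csSup (bAv x) ⟨y, hy, rfl⟩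
  -- nonempty neighborhoods where u ≠ v
  have hnb : ∀ x ∈ X, u x ≠ v x → {y | G.Adj x y}.Nonempty := by
    intro x hx hne
    by_contra h
    rw [Set.not_nonempty_iff_eq_empty] at h
    have e1 := hueq x hx; have e2 := hveq x hx
    unfold infLap at e1 e2
    rw [h, Set.image_empty, Real.sInf_empty, Real.sSup_empty] at e1 e2
    apply hne; linarith
  -- the structural identity and inequalities
  have hsum : ∀ x ∈ X,
      sInf (u '' {y | G.Adj x y}) + sSup (u '' {y | G.Adj x y}) - 2 * u x
        = sInf (v '' {y | G.Adj x y}) + sSup (v '' {y | G.Adj x y}) - 2 * v x := by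
    intro x hx
    have e1 := hueq x hx; have e2 := hveq x hx
    unfold infLap at e1 e2; linarith
  have hfpos : ∀ x ∈ X,
      0 ≤ sInf (u '' {y | G.Adj x y}) + sSup (u '' {y | G.Adj x y}) - 2 * u x := by
    intro x hx
    have e1 := hueq x hx; unfold infLap at e1
    rw [e1]; exact hsign x hx
  have hIdiff : ∀ x : V, {y | G.Adj x y}.Nonempty →
      sInf (u '' {y | G.Adj x y}) ≤ sInf (v '' {y | G.Adj x y}) + δ := by
    intro x hne
    have h : sInf (u '' {y | G.Adj x y}) - δ ≤ sInf (v '' {y | G.Adj x y}) := by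
      apply le_csInf (hne.image v)
      rintro _ ⟨y, hy, rfl⟩
      have h1 := csInf_le (bBu x) ⟨y, hy, rfl⟩
      have h2 := hle y
      linarith
    linarith
  exact walk_aux G X u v z W hW δ hδ hδdef hle hzero hX hIu hSv hsum hfpos hIdiff
    (claimA_aux G X u v z C hC δ hδ hle hX hIu hSv hnb hsum hfpos hIdiff)

/-- Uniqueness: on a subset `X` of finite width, for bounded `f` with `f ≥ 0` or `f ≤ 0`
on `X` and bounded boundary data `g`, bounded solutions of the Dirichlet problem
`Δ∞ u = f` on `X`, `u = g` on `V∖X` are unique. -/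
theorem stmt_3 {V : Type*} (G : SimpleGraph V) (X : Set V) (f g u v : V → ℝ)
    (hwidth : ∃ W : ℕ, ∀ x ∈ X, ∃ y ∈ Xᶜ, ∃ w : G.Walk x y, w.length ≤ W)
    (hfbdd : ∃ C, ∀ x ∈ X, |f x| ≤ C)
    (hsign : (∀ x ∈ X, 0 ≤ f x) ∨ (∀ x ∈ X, f x ≤ 0))
    (hgbdd : ∃ C, ∀ x ∈ Xᶜ, |g x| ≤ C)
    (hubdd : ∃ C, ∀ x, |u x| ≤ C) (hvbdd : ∃ C, ∀ x, |v x| ≤ C)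
    (hueq : ∀ x ∈ X, infLap G u x = f x) (hug : ∀ x ∈ Xᶜ, u x = g x)
    (hveq : ∀ x ∈ X, infLap G v x = f x) (hvg : ∀ x ∈ Xᶜ, v x = g x) :
    u = v := by
  have huv : ∀ x ∈ Xᶜ, u x = v x := fun x hx => by rw [hug x hx, hvg x hx]
  rcases hsign with hpos | hneg
  · funext x
    exact le_antisymm
      (key_aux G X f u v hwidth hpos hubdd hvbdd hueq hveq huv x)
      (key_aux G X f v u hwidth hpos hvbdd hubdd hveq hueq (fun x hx => (huv x hx).symm) x)
  · have hueq' : ∀ x ∈ X, infLap G (fun y => -u y) x = -f x := fun x hx => by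
      rw [infLap_neg_aux, hueq x hx]
    have hveq' : ∀ x ∈ X, infLap G (fun y => -v y) x = -f x := fun x hx => by
      rw [infLap_neg_aux, hveq x hx]
    have hubdd' : ∃ C, ∀ x, |(fun y => -u y) x| ≤ C := by
      obtain ⟨C, hC⟩ := hubdd; exact ⟨C, fun x => by simpa [abs_neg] using hC x⟩
    have hvbdd' : ∃ C, ∀ x, |(fun y => -v y) x| ≤ C := by
      obtain ⟨C, hC⟩ := hvbdd; exact ⟨C, fun x => by simpa [abs_neg] using hC x⟩
    have hsign' : ∀ x ∈ X, 0 ≤ -f x := fun x hx => by linarith [hneg x hx]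
    have huv' : ∀ x ∈ Xᶜ, (fun y => -u y) x = (fun y => -v y) x := fun x hx => by
      simp only; rw [huv x hx]
    funext x
    have h1 := key_aux G X (fun y => -f y) (fun y => -u y) (fun y => -v y)
      hwidth hsign' hubdd' hvbdd' hueq' hveq' huv' x
    have h2 := key_aux G X (fun y => -f y) (fun y => -v y) (fun y => -u y)
      hwidth hsign' hvbdd' hubdd' hveq' hueq' (fun x hx => (huv' x hx).symm) x
    linarith
end

section
/- (Existence via Perron's method) Let G=(V,E) be a graph, X ⊂ V with width(X) < ∞, f: X → ℝ bounded, and g: V∖X → ℝ bounded. Then there exists a bounded function u: V → ℝ satisfying Δ∞u(x) = f(x) for all x ∈ X and u(x) = g(x) for all x ∈ V∖X. -/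
private lemma mono_sInf' {α : Type*} {N : Set α} (hN : N.Nonempty) {u v : α → ℝ}
    (h : ∀ y, v y ≤ u y) (hb : BddBelow (v '' N)) : sInf (v '' N) ≤ sInf (u '' N) := by
  apply le_csInf (hN.image u)
  rintro _ ⟨y, hy, rfl⟩
  exact le_trans (csInf_le hb ⟨y, hy, rfl⟩) (h y)

private lemma mono_sSup' {α : Type*} {N : Set α} (hN : N.Nonempty) {u v : α → ℝ}
    (h : ∀ y, v y ≤ u y) (hb : BddAbove (u '' N)) : sSup (v '' N) ≤ sSup (u '' N) := by
  apply csSup_le (hN.image v)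
  rintro _ ⟨y, hy, rfl⟩
  exact le_trans (h y) (le_csSup hb ⟨y, hy, rfl⟩)

/-- Existence: on a subset `X` of finite width, for bounded `f` and bounded boundary
data `g`, there exists a bounded solution of `Δ∞ u = f` on `X`, `u = g` on `V∖X`. -/
theorem stmt_4 {V : Type*} (G : SimpleGraph V) (X : Set V) (f g : V → ℝ)
    (hwidth : ∃ W : ℕ, ∀ x ∈ X, ∃ y ∈ Xᶜ, ∃ w : G.Walk x y, w.length ≤ W)
    (hfbdd : ∃ C, ∀ x ∈ X, |f x| ≤ C)
    (hgbdd : ∃ C, ∀ x ∈ Xᶜ, |g x| ≤ C) :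
    ∃ u : V → ℝ, (∃ C, ∀ x, |u x| ≤ C) ∧
      (∀ x ∈ X, infLap G u x = f x) ∧ (∀ x ∈ Xᶜ, u x = g x) := by
  classical
  obtain ⟨W, hW⟩ := hwidth
  obtain ⟨Cf0, hf0⟩ := hfbdd
  obtain ⟨Cg0, hg0⟩ := hgbdd
  set Cf : ℝ := max Cf0 0 with hCfdef
  set Cg : ℝ := max Cg0 0 with hCgdef
  have hCf : (0:ℝ) ≤ Cf := le_max_right _ _
  have hCg : (0:ℝ) ≤ Cg := le_max_right _ _
  have hf : ∀ x ∈ X, |f x| ≤ Cf := fun x hx => le_trans (hf0 x hx) (le_max_left _ _)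
  have hg : ∀ x ∈ Xᶜ, |g x| ≤ Cg := fun x hx => le_trans (hg0 x hx) (le_max_left _ _)
  -- combinatorial distance to the complement
  set dX : V → ℕ := fun x => sInf {n | ∃ y ∈ Xᶜ, ∃ p : G.Walk x y, p.length = n} with hdXdef
  have hdprop : ∀ x ∈ X, 1 ≤ dX x ∧ dX x ≤ W ∧ ∃ y, G.Adj x y ∧ dX y + 1 ≤ dX x := by
    intro x hx
    obtain ⟨z, hz, p, hp⟩ := hW x hx
    have hne : {n | ∃ y ∈ Xᶜ, ∃ p : G.Walk x y, p.length = n}.Nonempty :=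
      ⟨p.length, z, hz, p, rfl⟩
    have hmem : ∃ y ∈ Xᶜ, ∃ p : G.Walk x y, p.length = dX x := Nat.sInf_mem hne
    obtain ⟨z', hz', q, hq⟩ := hmem
    have hle : dX x ≤ W := le_trans (Nat.sInf_le (s := {n | ∃ y ∈ Xᶜ, ∃ p : G.Walk x y, p.length = n}) ⟨z, hz, p, rfl⟩) hp
    have h1 : 1 ≤ dX x := by
      by_contra h0
      have h0' : dX x = 0 := by omega
      have : q.length = 0 := by rw [hq]; exact h0'
      have hxz : x = z' := SimpleGraph.Walk.eq_of_length_eq_zero this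
      exact hz' (hxz ▸ hx)
    refine ⟨h1, hle, ?_⟩
    revert hq
    cases q with
    | nil => exact absurd hx hz'
    | cons hadj q' =>
      intro hq
      rename_i yv
      refine ⟨yv, hadj, ?_⟩
      have hdy : dX yv ≤ q'.length := by
        simp only [hdXdef]
        exact Nat.sInf_le ⟨z', hz', q', rfl⟩
      simp only [SimpleGraph.Walk.length_cons] at hq
      omega
  -- the barrier profile
  set psi : ℕ → ℝ := fun k => -Cg - Cf * ((2:ℝ)^W - (2:ℝ)^(W - k)) with hpsidef
  have psi_anti : Antitone psi := by
    intro k k' h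
    have h2 : (2:ℝ)^(W - k') ≤ (2:ℝ)^(W - k) :=
      pow_le_pow_right₀ one_le_two (Nat.sub_le_sub_left h W)
    have := mul_le_mul_of_nonneg_left (sub_le_sub_left h2 ((2:ℝ)^W)) hCf
    simp only [hpsidef]
    nlinarith [this]
  have psi0 : psi 0 = -Cg := by simp [hpsidef]
  have hkey : ∀ k : ℕ, 1 ≤ k → k ≤ W → psi (k-1) + psi W - 2 * psi k = Cf := by
    intro k h1 h2
    have e1 : W - (k-1) = (W - k) + 1 := by omega
    have e2 : W - W = 0 := by omega
    simp only [hpsidef, e1, e2, pow_succ, pow_zero]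
    ring
  have psiW_le : ∀ k, psi W ≤ psi k := by
    intro k
    rcases le_or_gt k W with h | h
    · exact psi_anti h
    · have hk : W - k = W - W := by omega
      simp only [hpsidef, hk]
      exact le_rfl
  have psi_le0 : ∀ k, psi k ≤ -Cg := fun k => (psi_anti (Nat.zero_le k)).trans_eq psi0
  set phi : ℕ → ℝ := fun k => -psi k with hphidef
  have phi0 : phi 0 = Cg := by simp [hphidef, psi0]
  have phiW_ge : ∀ k, phi k ≤ phi W := fun k => by
    simp only [hphidef]; linarith [psiW_le k]
  have phi_mono : Monotone phi := fun k k' h => by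
    simp only [hphidef]; linarith [psi_anti h]
  have hkey2 : ∀ k : ℕ, 1 ≤ k → k ≤ W → phi (k-1) + phi W - 2 * phi k = -Cf := by
    intro k h1 h2
    simp only [hphidef]; linarith [hkey k h1 h2]
  have hglow : ∀ x ∈ Xᶜ, -Cg ≤ g x := fun x hx => (abs_le.mp (hg x hx)).1
  have hghigh : ∀ x ∈ Xᶜ, g x ≤ Cg := fun x hx => (abs_le.mp (hg x hx)).2
  set v0 : V → ℝ := fun x => if x ∈ X then psi (dX x) else g x with hv0def
  set w0 : V → ℝ := fun x => if x ∈ X then phi (dX x) else g x with hw0def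
  have hv0low : ∀ x, psi W ≤ v0 x := by
    intro x
    simp only [hv0def]
    split_ifs with hxX
    · exact psiW_le _
    · calc psi W ≤ psi 0 := psiW_le 0
        _ = -Cg := psi0
        _ ≤ g x := hglow x hxX
  have hw0high : ∀ x, w0 x ≤ phi W := by
    intro x
    simp only [hw0def]
    split_ifs with hxX
    · exact phiW_ge _
    · calc g x ≤ Cg := hghigh x hxX
        _ = phi 0 := phi0.symm
        _ ≤ phi W := phiW_ge 0
  have hv0w0 : ∀ x, v0 x ≤ w0 x := by
    intro x
    simp only [hv0def, hw0def]
    split_ifs with hxX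
    · have h1 := psi_le0 (dX x)
      have h2 : Cg ≤ phi (dX x) := phi0 ▸ phi_mono (Nat.zero_le _)
      linarith
    · exact le_rfl
  have hNne : ∀ x ∈ X, {y | G.Adj x y}.Nonempty := by
    intro x hx
    obtain ⟨-, -, y, hy, -⟩ := hdprop x hx
    exact ⟨y, hy⟩
  -- v0 is a subsolution
  have hv0sub : ∀ x ∈ X, f x ≤ infLap G v0 x := by
    intro x hx
    obtain ⟨h1, h2, y, hady, hdy⟩ := hdprop x hx
    have hNne' : {y | G.Adj x y}.Nonempty := ⟨y, hady⟩
    have hba : BddAbove (v0 '' {y | G.Adj x y}) :=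
      ⟨phi W, by rintro _ ⟨y', _, rfl⟩; exact le_trans (hv0w0 y') (hw0high y')⟩
    have hyv : psi (dX x - 1) ≤ v0 y := by
      simp only [hv0def]
      split_ifs with hyX
      · exact psi_anti (by omega)
      · calc psi (dX x - 1) ≤ psi 0 := psi_anti (Nat.zero_le _)
          _ = -Cg := psi0
          _ ≤ g y := hglow y hyX
    have hsup : psi (dX x - 1) ≤ sSup (v0 '' {y | G.Adj x y}) :=
      le_trans hyv (le_csSup hba ⟨y, hady, rfl⟩)
    have hinf : psi W ≤ sInf (v0 '' {y | G.Adj x y}) :=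
      le_csInf (hNne'.image v0) (by rintro _ ⟨y', _, rfl⟩; exact hv0low y')
    have hvx : v0 x = psi (dX x) := by simp only [hv0def]; rw [if_pos hx]
    have hfx : f x ≤ Cf := (abs_le.mp (hf x hx)).2
    have hk := hkey (dX x) h1 h2
    simp only [infLap]
    rw [hvx]
    linarith
  -- w0 is a supersolution
  have hw0sup : ∀ x ∈ X, infLap G w0 x ≤ f x := by
    intro x hx
    obtain ⟨h1, h2, y, hady, hdy⟩ := hdprop x hx
    have hNne' : {y | G.Adj x y}.Nonempty := ⟨y, hady⟩
    have hbb : BddBelow (w0 '' {y | G.Adj x y}) :=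
      ⟨psi W, by rintro _ ⟨y', _, rfl⟩; exact le_trans (hv0low y') (hv0w0 y')⟩
    have hyv : w0 y ≤ phi (dX x - 1) := by
      simp only [hw0def]
      split_ifs with hyX
      · exact phi_mono (by omega)
      · calc g y ≤ Cg := hghigh y hyX
          _ = phi 0 := phi0.symm
          _ ≤ phi (dX x - 1) := phi_mono (Nat.zero_le _)
    have hinf : sInf (w0 '' {y | G.Adj x y}) ≤ phi (dX x - 1) :=
      le_trans (csInf_le hbb ⟨y, hady, rfl⟩) hyv
    have hsup : sSup (w0 '' {y | G.Adj x y}) ≤ phi W :=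
      csSup_le (hNne'.image w0) (by rintro _ ⟨y', _, rfl⟩; exact hw0high y')
    have hwx : w0 x = phi (dX x) := by simp only [hw0def]; rw [if_pos hx]
    have hfx : -Cf ≤ f x := (abs_le.mp (hf x hx)).1
    have hk := hkey2 (dX x) h1 h2
    simp only [infLap]
    rw [hwx]
    linarith
  -- the Perron family
  set S : Set (V → ℝ) := {v | (∀ z, v0 z ≤ v z) ∧ (∀ z, v z ≤ w0 z) ∧
    (∀ z ∈ Xᶜ, v z = g z) ∧ ∀ z ∈ X, f z ≤ infLap G v z} with hSdef
  have hv0S : v0 ∈ S := by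
    refine ⟨fun z => le_rfl, hv0w0, ?_, hv0sub⟩
    intro z hz
    simp only [hv0def]
    exact if_neg hz
  set u : V → ℝ := fun x => sSup ((fun v : V → ℝ => v x) '' S) with hudef
  have himgne : ∀ x, ((fun v : V → ℝ => v x) '' S).Nonempty := fun x => ⟨v0 x, v0, hv0S, rfl⟩
  have himgbdd : ∀ x, BddAbove ((fun v : V → ℝ => v x) '' S) := fun x =>
    ⟨w0 x, by rintro _ ⟨v, hv, rfl⟩; exact hv.2.1 x⟩
  have hu_le_w : ∀ x, u x ≤ w0 x := fun x =>
    csSup_le (himgne x) (by rintro _ ⟨v, hv, rfl⟩; exact hv.2.1 x)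
  have hvleu : ∀ v ∈ S, ∀ x, v x ≤ u x := fun v hv x => le_csSup (himgbdd x) ⟨v, hv, rfl⟩
  have hv0u : ∀ x, v0 x ≤ u x := hvleu v0 hv0S
  have hulow : ∀ x, psi W ≤ u x := fun x => le_trans (hv0low x) (hv0u x)
  have huhigh : ∀ x, u x ≤ phi W := fun x => le_trans (hu_le_w x) (hw0high x)
  have hubdry : ∀ x ∈ Xᶜ, u x = g x := by
    intro x hx
    apply le_antisymm
    · exact csSup_le (himgne x) (by rintro _ ⟨v, hv, rfl⟩; exact (hv.2.2.1 x hx).le)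
    · have h1 := hv0u x
      have h2 : v0 x = g x := by simp only [hv0def]; exact if_neg hx
      linarith
  -- Claim A: u is a subsolution
  have hA : ∀ x ∈ X, f x ≤ infLap G u x := by
    intro x hx
    have hNne' := hNne x hx
    have hbaU : BddAbove (u '' {y | G.Adj x y}) :=
      ⟨phi W, by rintro _ ⟨y, _, rfl⟩; exact huhigh y⟩
    have key : ∀ v ∈ S, v x ≤
        (sInf (u '' {y | G.Adj x y}) + sSup (u '' {y | G.Adj x y}) - f x) / 2 := by
      intro v hv
      have h1 := hv.2.2.2 x hx
      have hbbV : BddBelow (v '' {y | G.Adj x y}) :=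
        ⟨psi W, by rintro _ ⟨y, _, rfl⟩; exact le_trans (hv0low y) (hv.1 y)⟩
      have h2 : sInf (v '' {y | G.Adj x y}) ≤ sInf (u '' {y | G.Adj x y}) :=
        mono_sInf' hNne' (hvleu v hv) hbbV
      have h3 : sSup (v '' {y | G.Adj x y}) ≤ sSup (u '' {y | G.Adj x y}) :=
        mono_sSup' hNne' (hvleu v hv) hbaU
      simp only [infLap] at h1
      linarith
    have hux : u x ≤ (sInf (u '' {y | G.Adj x y}) + sSup (u '' {y | G.Adj x y}) - f x) / 2 :=
      csSup_le (himgne x) (by rintro _ ⟨v, hv, rfl⟩; exact key v hv)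
    simp only [infLap]
    linarith
  -- Claim B: u is a supersolution (Perron bump argument)
  have hB : ∀ x ∈ X, infLap G u x ≤ f x := by
    intro x hx
    by_contra hcon
    push_neg at hcon
    have hNne' := hNne x hx
    have hbbU : BddBelow (u '' {y | G.Adj x y}) :=
      ⟨psi W, by rintro _ ⟨y, _, rfl⟩; exact hulow y⟩
    have hxw : u x < w0 x := by
      rcases lt_or_eq_of_le (hu_le_w x) with h | h
      · exact h
      · exfalso
        have hbaW : BddAbove (w0 '' {y | G.Adj x y}) :=
          ⟨phi W, by rintro _ ⟨y, _, rfl⟩; exact hw0high y⟩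
        have h2 : sInf (u '' {y | G.Adj x y}) ≤ sInf (w0 '' {y | G.Adj x y}) :=
          mono_sInf' hNne' hu_le_w hbbU
        have h3 : sSup (u '' {y | G.Adj x y}) ≤ sSup (w0 '' {y | G.Adj x y}) :=
          mono_sSup' hNne' hu_le_w hbaW
        have h4 := hw0sup x hx
        simp only [infLap] at hcon h4
        linarith
    set ε : ℝ := min ((infLap G u x - f x) / 2) (w0 x - u x) with hεdef
    have hεpos : 0 < ε := lt_min (by linarith) (by linarith)
    have hεle : ε ≤ (infLap G u x - f x) / 2 := by rw [hεdef]; exact min_le_left _ _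
    have hεle2 : ε ≤ w0 x - u x := by rw [hεdef]; exact min_le_right _ _
    set u' : V → ℝ := Function.update u x (u x + ε) with hu'def
    have hu'x : u' x = u x + ε := Function.update_self x _ u
    have hu'ne : ∀ z, z ≠ x → u' z = u z := fun z hz => Function.update_of_ne hz _ u
    have hu'ge : ∀ z, u z ≤ u' z := by
      intro z
      by_cases hz : z = x
      · subst hz; rw [hu'x]; linarith
      · rw [hu'ne z hz]
    have hu'lew : ∀ z, u' z ≤ w0 z := by
      intro z
      by_cases hz : z = x
      · subst hz; rw [hu'x]; linarith
      · rw [hu'ne z hz]; exact hu_le_w z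
    have hu'S : u' ∈ S := by
      refine ⟨fun z => le_trans (hv0u z) (hu'ge z), hu'lew, ?_, ?_⟩
      · intro z hz
        have hzx : z ≠ x := fun h => hz (h ▸ hx)
        rw [hu'ne z hzx]
        exact hubdry z hz
      · intro z hz
        by_cases hzx : z = x
        · subst hzx
          have himg : u' '' {y | G.Adj z y} = u '' {y | G.Adj z y} :=
            Set.image_congr (fun y hy => hu'ne y (SimpleGraph.Adj.ne' hy))
          simp only [infLap] at hcon hεle ⊢
          rw [himg, hu'x]
          linarith
        · have h2 : sInf (u '' {y | G.Adj z y}) ≤ sInf (u' '' {y | G.Adj z y}) :=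
            mono_sInf' (hNne z hz) hu'ge
              ⟨psi W, by rintro _ ⟨y, _, rfl⟩; exact hulow y⟩
          have h3 : sSup (u '' {y | G.Adj z y}) ≤ sSup (u' '' {y | G.Adj z y}) :=
            mono_sSup' (hNne z hz) hu'ge
              ⟨phi W, by rintro _ ⟨y, _, rfl⟩; exact le_trans (hu'lew y) (hw0high y)⟩
          have h4 := hA z hz
          have h5 : u' z = u z := hu'ne z hzx
          simp only [infLap] at h4 ⊢
          rw [h5]
          linarith
    have hle : u' x ≤ u x := hvleu u' hu'S x
    rw [hu'x] at hle
    linarith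
  refine ⟨u, ⟨phi W, ?_⟩, fun x hx => le_antisymm (hB x hx) (hA x hx), hubdry⟩
  intro x
  rw [abs_le]
  constructor
  · have h : psi W = -phi W := by simp [hphidef]
    linarith [hulow x]
  · exact huhigh x
end

section
/- (Perron family is stable under the infimum at one point, subsolution direction) Let G=(V,E) be a graph, X ⊂ V, f: X → ℝ, g: V∖X → ℝ, and let A = {v bounded on V : Δ∞v ≤ f on X, v ≥ g on V∖X}. Assume A is nonempty and u(x) := inf_{v∈A} v(x) is finite everywhere. Then Δ∞u(x) ≤ f(x) for all x ∈ X. -/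
lemma bddAbove_image_of_abs {V : Type*} {u : V → ℝ} {C : ℝ} (h : ∀ z, |u z| ≤ C)
    (S : Set V) : BddAbove (u '' S) :=
  ⟨C, by rintro r ⟨y, _, rfl⟩; exact (abs_le.1 (h y)).2⟩

lemma bddBelow_image_of_abs {V : Type*} {u : V → ℝ} {C : ℝ} (h : ∀ z, |u z| ≤ C)
    (S : Set V) : BddBelow (u '' S) :=
  ⟨-C, by rintro r ⟨y, _, rfl⟩; exact (abs_le.1 (h y)).1⟩

lemma infLap_mono {V : Type*} (G : SimpleGraph V) {w v : V → ℝ} {p : V}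
    (hwb : BddBelow (w '' {y | G.Adj p y}))
    (hvb : BddAbove (v '' {y | G.Adj p y}))
    (hle : ∀ z, w z ≤ v z) (hp : w p = v p) :
    infLap G w p ≤ infLap G v p := by
  unfold infLap
  rcases Set.eq_empty_or_nonempty {y | G.Adj p y} with h | h
  · rw [h]; simp [hp]
  · have h1 : sInf (w '' {y | G.Adj p y}) ≤ sInf (v '' {y | G.Adj p y}) :=
      le_csInf (h.image v) (by
        rintro b ⟨y, hy, rfl⟩
        exact le_trans (csInf_le hwb ⟨y, hy, rfl⟩) (hle y))
    have h2 : sSup (w '' {y | G.Adj p y}) ≤ sSup (v '' {y | G.Adj p y}) :=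
      csSup_le (h.image w) (by
        rintro b ⟨y, hy, rfl⟩
        exact le_trans (hle y) (le_csSup hvb ⟨y, hy, rfl⟩))
    rw [hp]; linarith

/-- The family is closed under pointwise minimum. -/
lemma min_mem_family {V : Type*} (G : SimpleGraph V) (X : Set V) (f g : V → ℝ)
    {v w : V → ℝ} {Cv Cw : ℝ}
    (hvC : ∀ z, |v z| ≤ Cv) (hwC : ∀ z, |w z| ≤ Cw)
    (hv : ∀ p ∈ X, infLap G v p ≤ f p) (hw : ∀ p ∈ X, infLap G w p ≤ f p)
    (hvg : ∀ p ∈ Xᶜ, g p ≤ v p) (hwg : ∀ p ∈ Xᶜ, g p ≤ w p) :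
    (∀ z, |min (v z) (w z)| ≤ max Cv Cw) ∧
    (∀ p ∈ X, infLap G (fun z => min (v z) (w z)) p ≤ f p) ∧
    (∀ p ∈ Xᶜ, g p ≤ min (v p) (w p)) := by
  have hmC : ∀ z, |min (v z) (w z)| ≤ max Cv Cw := by
    intro z
    rcases le_total (v z) (w z) with h | h
    · rw [min_eq_left h]; exact le_trans (hvC z) (le_max_left _ _)
    · rw [min_eq_right h]; exact le_trans (hwC z) (le_max_right _ _)
  refine ⟨hmC, ?_, fun p hp => le_min (hvg p hp) (hwg p hp)⟩
  intro p hp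
  rcases le_total (v p) (w p) with h | h
  · exact le_trans (infLap_mono G (bddBelow_image_of_abs hmC _)
      (bddAbove_image_of_abs hvC _) (fun z => min_le_left _ _) (min_eq_left h)) (hv p hp)
  · exact le_trans (infLap_mono G (bddBelow_image_of_abs hmC _)
      (bddAbove_image_of_abs hwC _) (fun z => min_le_right _ _) (min_eq_right h)) (hw p hp)

/-- Lowering a member at one point of `X`, given slack in the constraint there. -/
lemma lower_mem_family {V : Type*} [DecidableEq V] (G : SimpleGraph V) (X : Set V)
    (f g : V → ℝ) {m : V → ℝ} {x : V} (hx : x ∈ X) {C t : ℝ} (ht : 0 ≤ t)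
    (hC : ∀ z, |m z| ≤ C)
    (hlap : ∀ p ∈ X, infLap G m p ≤ f p)
    (hg : ∀ p ∈ Xᶜ, g p ≤ m p)
    (hslack : infLap G m x + 2 * t ≤ f x) :
    (∀ z, |Function.update m x (m x - t) z| ≤ C + t) ∧
    (∀ p ∈ X, infLap G (Function.update m x (m x - t)) p ≤ f p) ∧
    (∀ p ∈ Xᶜ, g p ≤ Function.update m x (m x - t) p) := by
  set w := Function.update m x (m x - t) with hwdef
  have hwle : ∀ z, w z ≤ m z := by
    intro z
    rcases eq_or_ne z x with rfl | h
    · rw [hwdef, Function.update_self]; linarith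
    · rw [hwdef, Function.update_of_ne h]
  have hwC : ∀ z, |w z| ≤ C + t := by
    intro z
    rcases eq_or_ne z x with rfl | h
    · rw [hwdef, Function.update_self]
      calc |m z - t| ≤ |m z| + |t| := abs_sub _ _
        _ ≤ C + t := by rw [abs_of_nonneg ht]; exact add_le_add_left (hC z) t
    · rw [hwdef, Function.update_of_ne h]
      exact le_trans (hC z) (by linarith)
  refine ⟨hwC, ?_, ?_⟩
  · intro p hp
    rcases eq_or_ne p x with rfl | h
    · -- at x : the neighbor values are unchanged
      have himg : w '' {y | G.Adj p y} = m '' {y | G.Adj p y} := by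
        apply Set.image_congr
        intro z hz
        have : z ≠ p := by
          rintro rfl
          exact G.irrefl hz
        rw [hwdef, Function.update_of_ne this]
      have hwp : w p = m p - t := by rw [hwdef, Function.update_self]
      have : infLap G w p = infLap G m p + 2 * t := by
        unfold infLap
        rw [himg, hwp]; ring
      rw [this]; linarith
    · have : infLap G w p ≤ infLap G m p :=
        infLap_mono G (bddBelow_image_of_abs hwC _) (bddAbove_image_of_abs hC _)
          hwle (by rw [hwdef, Function.update_of_ne h])
      exact le_trans this (hlap p hp)
  · intro p hp
    have : p ≠ x := by rintro rfl; exact hp hx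
    rw [hwdef, Function.update_of_ne this]
    exact hg p hp

/-- The Perron infimum of the family `A = {v bounded : Δ∞ v ≤ f on X, v ≥ g on V∖X}`
is itself a subsolution: `Δ∞ u ≤ f` on `X`. -/
theorem stmt_6 {V : Type*} (G : SimpleGraph V) (X : Set V) (f g : V → ℝ)
    (A : Set (V → ℝ))
    (hA : A = {v | (∃ C, ∀ x, |v x| ≤ C) ∧ (∀ x ∈ X, infLap G v x ≤ f x) ∧
      (∀ x ∈ Xᶜ, g x ≤ v x)})
    (hAne : A.Nonempty)
    (u : V → ℝ) (hu : ∀ x, u x = sInf {r | ∃ v ∈ A, v x = r})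
    (hfin : ∀ x, BddBelow {r | ∃ v ∈ A, v x = r}) :
    ∀ x ∈ X, infLap G u x ≤ f x := by
  classical
  subst hA
  obtain ⟨v₀, hv₀⟩ := hAne
  intro x hx
  -- basic facts
  have hne : ∀ z : V, {r | ∃ v ∈ {v : V → ℝ | (∃ C, ∀ x, |v x| ≤ C) ∧
      (∀ x ∈ X, infLap G v x ≤ f x) ∧ (∀ x ∈ Xᶜ, g x ≤ v x)}, v z = r}.Nonempty :=
    fun z => ⟨v₀ z, v₀, hv₀, rfl⟩
  have hule : ∀ v ∈ {v : V → ℝ | (∃ C, ∀ x, |v x| ≤ C) ∧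
      (∀ x ∈ X, infLap G v x ≤ f x) ∧ (∀ x ∈ Xᶜ, g x ≤ v x)}, ∀ z, u z ≤ v z := by
    intro v hv z
    rw [hu z]
    exact csInf_le (hfin z) ⟨v, hv, rfl⟩
  have hlt : ∀ (z : V) (c : ℝ), u z < c → ∃ v ∈ {v : V → ℝ | (∃ C, ∀ x, |v x| ≤ C) ∧
      (∀ x ∈ X, infLap G v x ≤ f x) ∧ (∀ x ∈ Xᶜ, g x ≤ v x)}, v z < c := by
    intro z c hc
    rw [hu z] at hc
    obtain ⟨r, ⟨v, hv, rfl⟩, hr⟩ := exists_lt_of_csInf_lt (hne z) hc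
    exact ⟨v, hv, hr⟩
  rcases Set.eq_empty_or_nonempty {y | G.Adj x y} with hN | ⟨y₀, hy₀⟩
  · -- no neighbors
    by_contra hcon
    push_neg at hcon
    have h1 : infLap G u x = -2 * u x := by unfold infLap; rw [hN]; simp
    rw [h1] at hcon
    obtain ⟨v, hv, hvx⟩ := hlt x (-(f x) / 2) (by linarith)
    have h2 : infLap G v x ≤ f x := hv.2.1 x hx
    have h3 : infLap G v x = -2 * v x := by unfold infLap; rw [hN]; simp
    rw [h3] at h2
    linarith
  · -- nonempty neighborhood; first show u is bounded below on neighbors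
    obtain ⟨C₀, hC₀⟩ := hv₀.1
    have hS₀ : BddAbove (v₀ '' {y | G.Adj x y}) := bddAbove_image_of_abs hC₀ _
    set S₀ := sSup (v₀ '' {y | G.Adj x y}) with hS₀def
    have hb : BddBelow (u '' {y | G.Adj x y}) := by
      by_contra hnb
      rw [not_bddBelow_iff] at hnb
      set K := S₀ - f x - 2 * u x + 1 with hKdef
      obtain ⟨r, ⟨y, hy, rfl⟩, hr⟩ := hnb (-K)
      obtain ⟨v, hv, hvy⟩ := hlt y (-K) hr
      obtain ⟨Cv, hCv⟩ := hv.1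
      -- pointwise min
      obtain ⟨hmC, hmlap, hmg⟩ := min_mem_family G X f g hC₀ hCv hv₀.2.1 hv.2.1 hv₀.2.2 hv.2.2
      set m := fun z => min (v₀ z) (v z) with hmdef
      have hm : m ∈ {v : V → ℝ | (∃ C, ∀ x, |v x| ≤ C) ∧
          (∀ x ∈ X, infLap G v x ≤ f x) ∧ (∀ x ∈ Xᶜ, g x ≤ v x)} :=
        ⟨⟨max C₀ Cv, hmC⟩, hmlap, hmg⟩
      have hinf : sInf (m '' {y | G.Adj x y}) < -K :=
        lt_of_le_of_lt (le_trans (csInf_le (bddBelow_image_of_abs hmC _) ⟨y, hy, rfl⟩)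
          (min_le_right _ _)) hvy
      have hsup : sSup (m '' {y | G.Adj x y}) ≤ S₀ :=
        csSup_le ⟨m y₀, y₀, hy₀, rfl⟩ (by
          rintro b ⟨z, hz, rfl⟩
          exact le_trans (min_le_left _ _) (le_csSup hS₀ ⟨z, hz, rfl⟩))
      have hmlapx : infLap G m x < -K + S₀ - 2 * m x := by
        unfold infLap; linarith
      set t := (f x - infLap G m x) / 2 with htdef
      have ht : 0 ≤ t := by
        have := hmlap x hx
        rw [htdef]; linarith
      obtain ⟨hwC, hwlap, hwg⟩ := lower_mem_family G X f g hx ht hmC hmlap hmg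
        (by rw [htdef]; ring_nf; linarith [hmlap x hx])
      have huw : u x ≤ Function.update m x (m x - t) x :=
        hule _ ⟨⟨max C₀ Cv + t, hwC⟩, hwlap, hwg⟩ x
      rw [Function.update_self] at huw
      have hmxu : u x ≤ m x := hule m hm x
      -- m x - t = m x - (f x - infLap m x)/2 < (S₀ - f x - K)/2 = u x - 1/2
      rw [htdef, hKdef] at *
      linarith
    -- main estimate
    by_contra hcon
    push_neg at hcon
    set ε := (infLap G u x - f x) / 2 with hεdef
    have hε : 0 < ε := by rw [hεdef]; linarith
    obtain ⟨v, hv, hvx⟩ := hlt x (u x + ε) (by linarith)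
    obtain ⟨Cv, hCv⟩ := hv.1
    have h1 : sInf (u '' {y | G.Adj x y}) ≤ sInf (v '' {y | G.Adj x y}) :=
      le_csInf ⟨v y₀, y₀, hy₀, rfl⟩ (by
        rintro b ⟨z, hz, rfl⟩
        exact le_trans (csInf_le hb ⟨z, hz, rfl⟩) (hule v hv z))
    have h2 : sSup (u '' {y | G.Adj x y}) ≤ sSup (v '' {y | G.Adj x y}) :=
      csSup_le ⟨u y₀, y₀, hy₀, rfl⟩ (by
        rintro b ⟨z, hz, rfl⟩
        exact le_trans (hule v hv z) (le_csSup (bddAbove_image_of_abs hCv _) ⟨z, hz, rfl⟩))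
    have h3 : infLap G v x ≤ f x := hv.2.1 x hx
    have h4 : infLap G u x ≤ infLap G v x + 2 * (v x - u x) := by
      unfold infLap at *; linarith
    rw [hεdef] at hvx
    linarith
end

section
/- (Perron infimum is a supersolution) Let G=(V,E) be a graph, X ⊂ V, f: X → ℝ, g: V∖X → ℝ, and A = {v bounded on V : Δ∞v ≤ f on X, v ≥ g on V∖X}. Assume A ≠ ∅ and u := inf_{v∈A} v is finite and bounded. Then Δ∞u(x) ≥ f(x) for all x ∈ X. (Proof idea: if Δ∞u(x₀) < f(x₀), then u − ε·1_{x₀} ∈ A for small ε > 0, contradicting minimality.) -/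
lemma aux_sInf_mono {V : Type*} {N : Set V} {u v : V → ℝ} (hb : BddBelow (u '' N))
    (h : ∀ y ∈ N, u y ≤ v y) : sInf (u '' N) ≤ sInf (v '' N) := by
  rcases N.eq_empty_or_nonempty with hN | hN
  · simp [hN]
  · refine le_csInf (hN.image v) ?_
    rintro b ⟨y, hy, rfl⟩
    exact le_trans (csInf_le hb ⟨y, hy, rfl⟩) (h y hy)

lemma aux_sSup_mono {V : Type*} {N : Set V} {u v : V → ℝ} (hb : BddAbove (v '' N))
    (h : ∀ y ∈ N, u y ≤ v y) : sSup (u '' N) ≤ sSup (v '' N) := by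
  rcases N.eq_empty_or_nonempty with hN | hN
  · simp [hN]
  · refine csSup_le (hN.image u) ?_
    rintro b ⟨y, hy, rfl⟩
    exact le_trans (h y hy) (le_csSup hb ⟨y, hy, rfl⟩)

lemma aux_bddBelow {V : Type*} {N : Set V} {u : V → ℝ} {C : ℝ} (h : ∀ x, |u x| ≤ C) :
    BddBelow (u '' N) := by
  refine ⟨-C, ?_⟩
  rintro r ⟨y, _, rfl⟩
  have := (abs_le.mp (h y)).1
  linarith

lemma aux_bddAbove {V : Type*} {N : Set V} {u : V → ℝ} {C : ℝ} (h : ∀ x, |u x| ≤ C) :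
    BddAbove (u '' N) := by
  refine ⟨C, ?_⟩
  rintro r ⟨y, _, rfl⟩
  exact (abs_le.mp (h y)).2

/-- The Perron infimum of the family `A = {v bounded : Δ∞ v ≤ f on X, v ≥ g on V∖X}`,
when finite and bounded, is a supersolution: `Δ∞ u ≥ f` on `X`. -/
theorem stmt_7 {V : Type*} (G : SimpleGraph V) (X : Set V) (f g : V → ℝ)
    (A : Set (V → ℝ))
    (hA : A = {v | (∃ C, ∀ x, |v x| ≤ C) ∧ (∀ x ∈ X, infLap G v x ≤ f x) ∧
      (∀ x ∈ Xᶜ, g x ≤ v x)})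
    (hAne : A.Nonempty)
    (u : V → ℝ) (hu : ∀ x, u x = sInf {r | ∃ v ∈ A, v x = r})
    (hfin : ∀ x, BddBelow {r | ∃ v ∈ A, v x = r})
    (hubdd : ∃ C, ∀ x, |u x| ≤ C) :
    ∀ x ∈ X, f x ≤ infLap G u x := by
  classical
  obtain ⟨C, hC⟩ := hubdd
  -- u ≤ v for all v ∈ A
  have hle : ∀ v ∈ A, ∀ x, u x ≤ v x := by
    intro v hv x
    rw [hu x]
    exact csInf_le (hfin x) ⟨v, hv, rfl⟩
  -- g ≤ u on Xᶜ
  have hgu : ∀ x ∈ Xᶜ, g x ≤ u x := by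
    intro x hx
    rw [hu x]
    refine le_csInf ?_ ?_
    · obtain ⟨v, hv⟩ := hAne; exact ⟨v x, v, hv, rfl⟩
    · rintro r ⟨v, hv, rfl⟩
      rw [hA] at hv
      exact hv.2.2 x hx
  -- Δ∞ u ≤ f on X
  have hlap : ∀ x ∈ X, infLap G u x ≤ f x := by
    intro x hx
    refine le_of_forall_pos_le_add ?_
    intro ε hε
    have hne : {r | ∃ v ∈ A, v x = r}.Nonempty := by
      obtain ⟨v, hv⟩ := hAne; exact ⟨v x, v, hv, rfl⟩
    have hlt : sInf {r | ∃ v ∈ A, v x = r} < u x + ε / 2 := by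
      rw [← hu x]; linarith
    obtain ⟨r, ⟨v, hv, rfl⟩, hr⟩ := exists_lt_of_csInf_lt hne hlt
    rw [hA] at hv
    obtain ⟨⟨D, hD⟩, hvf, hvg⟩ := hv
    have hvA : v ∈ A := by rw [hA]; exact ⟨⟨D, hD⟩, hvf, hvg⟩
    have h1 : sInf (u '' {y | G.Adj x y}) ≤ sInf (v '' {y | G.Adj x y}) :=
      aux_sInf_mono (aux_bddBelow hC) (fun y _ => hle v hvA y)
    have h2 : sSup (u '' {y | G.Adj x y}) ≤ sSup (v '' {y | G.Adj x y}) :=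
      aux_sSup_mono (aux_bddAbove hD) (fun y _ => hle v hvA y)
    have := hvf x hx
    unfold infLap at this ⊢
    linarith
  -- Main argument by contradiction
  intro x₀ hx₀
  by_contra hcon
  push_neg at hcon
  set ε := (f x₀ - infLap G u x₀) / 2 with hεdef
  have hε : 0 < ε := by rw [hεdef]; linarith
  set w : V → ℝ := fun y => if y = x₀ then u x₀ - ε else u y with hw
  have hwle : ∀ y, w y ≤ u y := by
    intro y
    by_cases hy : y = x₀ <;> simp [hw, hy] <;> linarith
  have hwA : w ∈ A := by
    rw [hA]
    refine ⟨⟨C + ε, ?_⟩, ?_, ?_⟩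
    · intro y
      by_cases hy : y = x₀
      · simp only [hw, hy, if_pos]
        have := abs_le.mp (hC x₀)
        rw [abs_le]; constructor <;> simp <;> linarith
      · simp only [hw, if_neg hy]
        have := abs_le.mp (hC y)
        rw [abs_le]; constructor <;> linarith
    · intro x hx
      by_cases hxx : x = x₀
      · subst hxx
        have himg : w '' {y | G.Adj x y} = u '' {y | G.Adj x y} := by
          apply Set.image_congr
          intro y hy
          have : y ≠ x := (G.ne_of_adj hy).symm
          simp [hw, this]
        unfold infLap
        rw [himg]
        have hwx : w x = u x - ε := by simp [hw]
        rw [hwx]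
        have h0 : infLap G u x = sInf (u '' {y | G.Adj x y}) + sSup (u '' {y | G.Adj x y}) - 2 * u x := rfl
        linarith [hεdef, hcon]
      · have h1 : sInf (w '' {y | G.Adj x y}) ≤ sInf (u '' {y | G.Adj x y}) := by
          refine aux_sInf_mono ?_ (fun y _ => hwle y)
          refine ⟨-(C + ε), ?_⟩
          rintro r ⟨y, _, rfl⟩
          have := abs_le.mp (hC y)
          by_cases hy : y = x₀
          · have h0 := abs_le.mp (hC x₀); simp [hw, hy]; linarith
          · simp [hw, hy]; linarith
        have h2 : sSup (w '' {y | G.Adj x y}) ≤ sSup (u '' {y | G.Adj x y}) :=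
          aux_sSup_mono (aux_bddAbove hC) (fun y _ => hwle y)
        have hwx : w x = u x := by simp [hw, hxx]
        have := hlap x hx
        unfold infLap at this ⊢
        rw [hwx]
        linarith
    · intro x hx
      have hxx : x ≠ x₀ := fun h => hx (h ▸ hx₀)
      have : w x = u x := by simp [hw, hxx]
      rw [this]
      exact hgu x hx
  have := hle w hwA x₀
  have hwx₀ : w x₀ = u x₀ - ε := by simp [hw]
  rw [hwx₀] at this
  linarith
end

section
/- (Unbounded infinity harmonic function with zero boundary data) Consider the graph G with vertex set ℕ≥0 and edges 0∼k and k∼2k for every k ≥ 1. Let X = ℕ≥1. Then the function u(n) = n satisfies Δ∞u(n) = 0 for all n ∈ X and u(0) = 0; thus the Dirichlet problem Δ∞u = 0 on X with u(0) = 0 has both the zero solution and the unbounded solution u(n) = n. -/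
/-- The graph on `ℕ` with edges `0 ∼ k` and `k ∼ 2k` for every `k ≥ 1`. -/
def doublingGraph : SimpleGraph ℕ :=
  SimpleGraph.fromRel (fun m n => (m = 0 ∧ 1 ≤ n) ∨ (n = 2 * m ∧ 1 ≤ m))

lemma adj_zero {n : ℕ} (hn : 1 ≤ n) : doublingGraph.Adj n 0 := by
  refine ⟨by omega, ?_⟩
  right; left; exact ⟨rfl, hn⟩

lemma adj_double {n : ℕ} (hn : 1 ≤ n) : doublingGraph.Adj n (2 * n) := by
  refine ⟨by omega, ?_⟩
  left; right; exact ⟨rfl, hn⟩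

lemma adj_le {n m : ℕ} (hn : 1 ≤ n) (h : doublingGraph.Adj n m) : m ≤ 2 * n := by
  rcases h with ⟨hne, h | h⟩ <;> rcases h with h | h <;> omega

/-- On the graph with edges `0 ∼ k` and `k ∼ 2k` (`k ≥ 1`), with `X = ℕ≥1`,
both the zero function and the unbounded function `u(n) = n` solve
`Δ∞ u = 0` on `X` with `u(0) = 0`. -/
theorem stmt_13 :
    (∀ n : ℕ, 1 ≤ n → infLap doublingGraph (fun k => (k : ℝ)) n = 0) ∧
    ((fun k => (k : ℝ)) 0 = 0) ∧
    (∀ n : ℕ, 1 ≤ n → infLap doublingGraph (fun _ => (0 : ℝ)) n = 0) ∧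
    ((fun _ : ℕ => (0 : ℝ)) 0 = 0) ∧
    ¬ ∃ C : ℝ, ∀ n : ℕ, |(n : ℝ)| ≤ C := by
  refine ⟨?_, rfl, ?_, rfl, ?_⟩
  · intro n hn
    have h0 : (0 : ℝ) ∈ ((fun k : ℕ => (k : ℝ)) '' {y | doublingGraph.Adj n y}) :=
      ⟨0, adj_zero hn, by norm_num⟩
    have h2 : ((2 * n : ℕ) : ℝ) ∈ ((fun k : ℕ => (k : ℝ)) '' {y | doublingGraph.Adj n y}) :=
      ⟨2 * n, adj_double hn, rfl⟩
    have hlb : ∀ x ∈ ((fun k : ℕ => (k : ℝ)) '' {y | doublingGraph.Adj n y}), (0 : ℝ) ≤ x := by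
      rintro x ⟨m, _, rfl⟩; positivity
    have hub : ∀ x ∈ ((fun k : ℕ => (k : ℝ)) '' {y | doublingGraph.Adj n y}),
        x ≤ ((2 * n : ℕ) : ℝ) := by
      rintro x ⟨m, hm, rfl⟩; simpa using (Nat.cast_le (α := ℝ)).mpr (adj_le hn hm)
    have hinf : sInf ((fun k : ℕ => (k : ℝ)) '' {y | doublingGraph.Adj n y}) = 0 :=
      le_antisymm (csInf_le ⟨0, hlb⟩ h0) (le_csInf ⟨_, h0⟩ hlb)
    have hsup : sSup ((fun k : ℕ => (k : ℝ)) '' {y | doublingGraph.Adj n y}) = ((2 * n : ℕ) : ℝ) :=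
      le_antisymm (csSup_le ⟨_, h2⟩ hub) (le_csSup ⟨_, hub⟩ h2)
    simp only [infLap, hinf, hsup]
    push_cast
    ring
  · intro n hn
    have himg : ((fun _ : ℕ => (0 : ℝ)) '' {y | doublingGraph.Adj n y}) = {0} := by
      apply Set.eq_singleton_iff_nonempty_unique_mem.mpr
      exact ⟨⟨0, 0, adj_zero hn, rfl⟩, by rintro x ⟨m, _, rfl⟩; rfl⟩
    simp [infLap, himg]
  · rintro ⟨C, hC⟩
    obtain ⟨n, hn⟩ := exists_nat_gt C
    exact absurd (hC n) (by rw [abs_of_nonneg (by positivity)]; linarith)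
end

section
/- On the comb graph with tooth lengths l_n, the function u(n,l) = (l_n − l)/l_n satisfies Δ∞u(n,l) = −f(n,l) for all l < l_n and u(n,l_n) = 0, where f(n,0) = 1/l_n and f(n,l) = 0 for 0 < l < l_n. -/
/-- The comb graph with tooth lengths `l`: vertices `(n, k)` with `k ≤ l n`, shaft edges
`(n+1,0) ∼ (n,0)` and tooth edges `(n,k+1) ∼ (n,k)`. -/
def combGraph (l : ℕ → ℕ) : SimpleGraph {p : ℕ × ℕ // p.2 ≤ l p.1} :=
  SimpleGraph.fromRel (fun p q =>
    (p.1.2 = 0 ∧ q.1.2 = 0 ∧ q.1.1 = p.1.1 + 1) ∨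
    (p.1.1 = q.1.1 ∧ q.1.2 = p.1.2 + 1))

/-- On the comb graph with positive nondecreasing tooth lengths `l`, the function
`u(n,k) = (l n - k)/(l n)` satisfies `Δ∞ u (n,k) = -f(n,k)` for `k < l n` and
`u(n, l n) = 0`, where `f(n,0) = 1/(l n)` and `f(n,k) = 0` for `0 < k < l n`. -/
theorem stmt_14 (l : ℕ → ℕ) (hl : ∀ n, 0 < l n) (hmono : Monotone l)
    (u f : {p : ℕ × ℕ // p.2 ≤ l p.1} → ℝ)
    (hu : ∀ p, u p = ((l p.1.1 : ℝ) - p.1.2) / (l p.1.1 : ℝ))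
    (hf : ∀ p, f p = if p.1.2 = 0 then 1 / (l p.1.1 : ℝ) else 0) :
    (∀ p : {p : ℕ × ℕ // p.2 ≤ l p.1}, p.1.2 < l p.1.1 →
      infLap (combGraph l) u p = -(f p)) ∧
    (∀ p : {p : ℕ × ℕ // p.2 ≤ l p.1}, p.1.2 = l p.1.1 → u p = 0) := by
  have hone : ∀ p : {p : ℕ × ℕ // p.2 ≤ l p.1}, p.1.2 = 0 → u p = 1 := by
    intro p h
    have hpos : (0:ℝ) < (l p.1.1 : ℝ) := by exact_mod_cast hl p.1.1
    rw [hu, h]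
    push_cast
    field_simp
    simp
  constructor
  · rintro ⟨⟨n, k⟩, hk⟩ hlt
    simp only at hlt
    have hln : (0:ℝ) < (l n : ℝ) := by exact_mod_cast hl n
    rcases Nat.eq_zero_or_pos k with rfl | hkpos
    · -- k = 0
      have himg : u '' {y | (combGraph l).Adj ⟨(n,0), hk⟩ y}
          = {((l n : ℝ) - 1) / (l n : ℝ), 1} := by
        ext r
        simp only [Set.mem_image, Set.mem_setOf_eq, Set.mem_insert_iff,
          Set.mem_singleton_iff]
        constructor
        · rintro ⟨⟨⟨m, j⟩, hm⟩, hadj, rfl⟩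
          rw [combGraph, SimpleGraph.fromRel_adj] at hadj
          obtain ⟨hne, h | h⟩ := hadj
          · rcases h with ⟨-, hq0, -⟩ | ⟨h1, h2⟩
            · right; exact hone _ hq0
            · left
              simp only at h1 h2
              subst h1
              rw [hu]
              simp only [h2]
              push_cast
              ring_nf
          · rcases h with ⟨hq0, -, -⟩ | ⟨h1, h2⟩
            · right; exact hone _ hq0
            · simp at h2
        · rintro (rfl | rfl)
          · refine ⟨⟨(n, 1), hl n⟩, ?_, ?_⟩
            · rw [combGraph, SimpleGraph.fromRel_adj]
              refine ⟨?_, Or.inl (Or.inr ⟨rfl, rfl⟩)⟩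
              intro h
              simpa using congrArg (fun x => x.1.2) h
            · rw [hu]
              norm_num
          · refine ⟨⟨(n+1, 0), Nat.zero_le _⟩, ?_, hone _ rfl⟩
            rw [combGraph, SimpleGraph.fromRel_adj]
            refine ⟨?_, Or.inl (Or.inl ⟨rfl, rfl, rfl⟩)⟩
            intro h
            simpa using congrArg (fun x => x.1.1) h
      rw [infLap, himg, csInf_pair, csSup_pair]
      have hsum : (((l n : ℝ) - 1) / (l n : ℝ)) ⊓ 1 + (((l n : ℝ) - 1) / (l n : ℝ)) ⊔ 1
          = ((l n : ℝ) - 1) / (l n : ℝ) + 1 := min_add_max _ _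
      rw [hsum, hone _ rfl, hf]
      simp only [ite_true, eq_self_iff_true, if_pos rfl]
      field_simp
      ring
    · -- 0 < k
      have hk1 : k - 1 ≤ l n := le_trans (Nat.sub_le k 1) hk
      have hcast : ((k - 1 : ℕ) : ℝ) = (k : ℝ) - 1 := by
        have h1 : 1 ≤ k := hkpos
        have := Nat.cast_sub (R := ℝ) h1
        simpa using this
      have himg : u '' {y | (combGraph l).Adj ⟨(n,k), hk⟩ y}
          = {((l n : ℝ) - ((k : ℝ) + 1)) / (l n : ℝ),
             ((l n : ℝ) - ((k : ℝ) - 1)) / (l n : ℝ)} := by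
        ext r
        simp only [Set.mem_image, Set.mem_setOf_eq, Set.mem_insert_iff,
          Set.mem_singleton_iff]
        constructor
        · rintro ⟨⟨⟨m, j⟩, hm⟩, hadj, rfl⟩
          rw [combGraph, SimpleGraph.fromRel_adj] at hadj
          obtain ⟨hne, h | h⟩ := hadj
          · rcases h with ⟨h0, -, -⟩ | ⟨h1, h2⟩
            · simp only at h0; omega
            · left
              simp only at h1 h2
              subst h1
              rw [hu]
              simp only [h2]
              push_cast
              ring_nf
          · rcases h with ⟨-, h0, -⟩ | ⟨h1, h2⟩
            · simp only at h0; omega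
            · right
              simp only at h1 h2
              rw [hu]
              simp only [← h1]
              have hj : (j : ℝ) = (k : ℝ) - 1 := by
                have : k = j + 1 := h2
                push_cast [this]
                ring
              rw [hj]
        · rintro (rfl | rfl)
          · refine ⟨⟨(n, k + 1), hlt⟩, ?_, ?_⟩
            · rw [combGraph, SimpleGraph.fromRel_adj]
              refine ⟨?_, Or.inl (Or.inr ⟨rfl, rfl⟩)⟩
              intro h
              have := congrArg (fun x => x.1.2) h
              simp at this
            · rw [hu]
              push_cast
              ring_nf
          · refine ⟨⟨(n, k - 1), hk1⟩, ?_, ?_⟩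
            · rw [combGraph, SimpleGraph.fromRel_adj]
              refine ⟨?_, Or.inr (Or.inr ⟨rfl, show k = k - 1 + 1 by omega⟩)⟩
              intro h
              have := congrArg (fun x => x.1.2) h
              simp only at this
              omega
            · rw [hu]
              simp only [hcast]
      rw [infLap, himg, csInf_pair, csSup_pair]
      rw [min_add_max, hu, hf]
      simp only [if_neg (Nat.pos_iff_ne_zero.mp hkpos)]
      field_simp
      ring
  · rintro ⟨⟨n, k⟩, hk⟩ hp
    simp only at hp
    rw [hu]
    simp [hp]
end

section
/- For C ≥ 2 and all integers 0 ≤ k ≤ n, the inequality (C³+k)/(C+k)³ ≤ (C+n)³/(C+n+k)³ holds; equivalently (n+C)³(k+C)³ ≥ (C+n+k)³(C³+k). -/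
/-- For `C ≥ 2` and integers `0 ≤ k ≤ n`,
`(C³+k)/(C+k)³ ≤ (C+n)³/(C+n+k)³`. -/
theorem stmt_15 (C : ℝ) (hC : 2 ≤ C) (n k : ℕ) (hkn : k ≤ n) :
    (C ^ 3 + (k : ℝ)) / (C + k) ^ 3 ≤ (C + n) ^ 3 / (C + n + k) ^ 3 := by
  rcases Nat.eq_zero_or_pos k with hk0 | hk1
  · subst hk0
    have hC0 : (0:ℝ) < C := by linarith
    have hn0 : (0:ℝ) < C + n := by positivity
    simp [div_self (by positivity : ((C:ℝ)) ^ 3 ≠ 0), div_self (by positivity : (C + (n:ℝ)) ^ 3 ≠ 0)]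
  · have hx : (1:ℝ) ≤ (k:ℝ) := by exact_mod_cast hk1
    have hy : (k:ℝ) ≤ (n:ℝ) := by exact_mod_cast hkn
    set x := (k:ℝ)
    set y := (n:ℝ)
    have hC0 : (0:ℝ) < C := by linarith
    have h1 : (0:ℝ) < (C + x) ^ 3 := by positivity
    have h2 : (0:ℝ) < (C + 2*x) ^ 3 := by positivity
    have h3 : (0:ℝ) < (C + y + x) ^ 3 := by positivity
    have stepA : (C ^ 3 + x) / (C + x) ^ 3 ≤ (C + x) ^ 3 / (C + 2*x) ^ 3 := by
      rw [div_le_div_iff₀ h1 h2]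
      nlinarith [mul_pos (lt_of_lt_of_le zero_lt_one hx) hC0,
        mul_nonneg (mul_nonneg (sub_nonneg.2 hx) (sub_nonneg.2 hx)) (pow_pos hC0 3).le,
        sq_nonneg (x-1), sq_nonneg (C-2), mul_nonneg (sub_nonneg.2 hx) (sub_nonneg.2 hC),
        pow_le_pow_left₀ (by linarith : (0:ℝ) ≤ 1) hx 3, sq_nonneg x, sq_nonneg C,
        mul_nonneg (sub_nonneg.2 hx) (sq_nonneg C), mul_nonneg (sub_nonneg.2 hC) (sq_nonneg x)]
    have stepB : (C + x) ^ 3 / (C + 2*x) ^ 3 ≤ (C + y) ^ 3 / (C + y + x) ^ 3 := by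
      have hd2 : (0:ℝ) < C + 2*x := by linarith
      have hd3 : (0:ℝ) < C + y + x := by linarith
      have hfrac : (C + x) / (C + 2*x) ≤ (C + y) / (C + y + x) := by
        rw [div_le_div_iff₀ hd2 hd3]
        nlinarith [mul_nonneg (by linarith : (0:ℝ) ≤ x) (sub_nonneg.2 hy)]
      have hnn : (0:ℝ) ≤ (C + x) / (C + 2*x) := by positivity
      have := pow_le_pow_left₀ hnn hfrac 3
      rwa [div_pow, div_pow] at this
    linarith
end

section
/- (Multiple bounded solutions when width is infinite) On the comb graph with tooth lengths l_n = (n+C)³ for C ≥ 2, the Dirichlet problem Δ∞u(n,l) = −f(n,l) for l < l_n, u(n,l_n) = 0, with f(n,0)=1/l_n and f(n,l)=0 for 0 < l < l_n, admits at least two distinct bounded solutions: u(n,l) = (l_n−l)/l_n, and v defined by v(0,0) = l₀·Σ_{k≥0} 1/l_k, v(n,0) = v(n−1,0) + Σ_{k≥n} 1/l_k, and v(n,l) = ((l_n−l)/l_n)·v(n,0). -/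
/-- The values of the second solution `v` along the shaft of the comb:
`v(0,0) = l₀ Σ_{k≥0} 1/l_k`, `v(n,0) = v(n-1,0) + Σ_{k≥n} 1/l_k`. -/
noncomputable def shaftValue (l : ℕ → ℕ) : ℕ → ℝ
  | 0 => (l 0 : ℝ) * ∑' k : ℕ, (1 : ℝ) / (l k : ℝ)
  | n + 1 => shaftValue l n + ∑' k : ℕ, (1 : ℝ) / (l (n + 1 + k) : ℝ)

open Filter Finset

namespace Stmt17Aux

/-- tail sum T(m) = Σ_{k≥0} 1/(m+k+C)^3 -/
noncomputable def tl (Cn m : ℕ) : ℝ := ∑' k : ℕ, (1:ℝ) / (((m + k + Cn) ^ 3 : ℕ) : ℝ)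

lemma summable_tl (Cn m : ℕ) :
    Summable (fun k : ℕ => (1:ℝ) / (((m + k + Cn) ^ 3 : ℕ) : ℝ)) := by
  have h : Summable (fun n : ℕ => (1:ℝ)/(n:ℝ)^3) :=
    Real.summable_one_div_nat_pow.mpr (by norm_num)
  have h2 := (summable_nat_add_iff (f := fun n : ℕ => (1:ℝ)/(n:ℝ)^3) (m + Cn)).mpr h
  apply h2.congr
  intro k
  push_cast
  ring

lemma ineq_lb (x : ℝ) (hx : 1 ≤ x) : 1/(2*x^2) - 1/(2*(x+1)^2) ≤ 1/x^3 := by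
  have h0 : 0 < x := by linarith
  have h1 : 0 < x + 1 := by linarith
  rw [div_sub_div _ _ (by positivity) (by positivity),
    div_le_div_iff₀ (by positivity) (by positivity)]
  nlinarith [sq_nonneg x, sq_nonneg (x+1), pow_pos h0 3]

lemma ineq_ub (x : ℝ) (hx : 2 ≤ x) : 1/x^3 ≤ 1/(2*(x-1)*x) - 1/(2*x*(x+1)) := by
  have h0 : 0 < x := by linarith
  have h1 : 0 < x - 1 := by linarith
  have h2 : 0 < x + 1 := by linarith
  rw [div_sub_div _ _ (by positivity) (by positivity),
    div_le_div_iff₀ (by positivity) (by positivity)]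
  nlinarith [pow_pos h0 3, mul_pos h1 h2]

lemma tl_nonneg (Cn m : ℕ) : 0 ≤ tl Cn m :=
  tsum_nonneg (fun k => by positivity)

lemma tl_pos (Cn m : ℕ) (hC : 1 ≤ Cn) : 0 < tl Cn m := by
  refine Summable.tsum_pos (summable_tl Cn m) (fun k => by positivity) 0 ?_
  have : 0 < m + 0 + Cn := by omega
  positivity

lemma tl_succ (Cn m : ℕ) : tl Cn m = 1/(((m+Cn)^3 : ℕ) : ℝ) + tl Cn (m+1) := by
  rw [tl, Summable.tsum_eq_zero_add (summable_tl Cn m)]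
  have h1 : (1:ℝ)/(((m+0+Cn)^3 : ℕ):ℝ) = 1/(((m+Cn)^3 : ℕ):ℝ) := by norm_num
  have h2 : (∑' k : ℕ, (1:ℝ)/(((m+(k+1)+Cn)^3 : ℕ):ℝ)) = tl Cn (m+1) := by
    rw [tl]; exact tsum_congr fun k => by congr 3; omega
  rw [h1, h2]

lemma tl_lb (Cn m : ℕ) (h : 1 ≤ m + Cn) :
    1/(2*((m+Cn : ℕ):ℝ)^2) ≤ tl Cn m := by
  set g : ℕ → ℝ := fun j => 1/(2*((m+j+Cn : ℕ):ℝ)^2) with hg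
  have hstep : ∀ n : ℕ, g 0 - g n ≤ tl Cn m := by
    intro n
    have h1 : ∑ k ∈ range n, (g k - g (k+1)) = g 0 - g n := Finset.sum_range_sub' g n
    have h2 : ∑ k ∈ range n, (g k - g (k+1)) ≤
        ∑ k ∈ range n, (1:ℝ) / (((m + k + Cn) ^ 3 : ℕ) : ℝ) := by
      refine Finset.sum_le_sum fun k _ => ?_
      have hx : (1:ℝ) ≤ ((m+k+Cn : ℕ):ℝ) := by
        exact_mod_cast Nat.one_le_iff_ne_zero.mpr (by omega)
      have := ineq_lb ((m+k+Cn : ℕ):ℝ) hx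
      simp only [hg]
      push_cast
      push_cast at this
      refine (le_of_eq ?_).trans (this.trans (le_of_eq ?_)) <;> push_cast <;> ring
    have h3 := Summable.sum_le_tsum (range n) (fun i _ => by positivity) (summable_tl Cn m)
    rw [h1] at h2
    exact h2.trans (h3.trans_eq rfl)
  have hA : Tendsto (fun n : ℕ => ((m+n+Cn : ℕ):ℝ)) atTop atTop :=
    tendsto_natCast_atTop_atTop.comp
      (tendsto_atTop_mono (fun n => by omega : ∀ n : ℕ, n ≤ m+n+Cn) tendsto_id)
  have hgnat : Tendsto (fun n : ℕ => (2*((m+n+Cn : ℕ):ℝ)^2)) atTop atTop := by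
    refine tendsto_atTop_mono (fun n => ?_) hA
    have hx : (1:ℝ) ≤ ((m+n+Cn : ℕ):ℝ) := by exact_mod_cast (by omega : 1 ≤ m+n+Cn)
    nlinarith
  have hg0 : Tendsto g atTop (nhds 0) :=
    hgnat.inv_tendsto_atTop.congr fun n => (one_div _).symm
  have hlim : Tendsto (fun n => g 0 - g n) atTop (nhds (g 0)) := by
    simpa using (tendsto_const_nhds.sub hg0)
  have := le_of_tendsto hlim (Filter.Eventually.of_forall hstep)
  simpa [hg] using this

lemma tl_ub (Cn m : ℕ) (h : 2 ≤ m + Cn) :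
    tl Cn m ≤ 1/(2*(((m+Cn : ℕ):ℝ) - 1)*((m+Cn : ℕ):ℝ)) := by
  set g : ℕ → ℝ := fun j => 1/(2*(((m+j+Cn : ℕ):ℝ)-1)*((m+j+Cn : ℕ):ℝ)) with hg
  refine Summable.tsum_le_of_sum_range_le (summable_tl Cn m) fun n => ?_
  have h1 : ∑ k ∈ range n, (g k - g (k+1)) = g 0 - g n := Finset.sum_range_sub' g n
  have h2 : ∑ k ∈ range n, (1:ℝ) / (((m + k + Cn) ^ 3 : ℕ) : ℝ) ≤
      ∑ k ∈ range n, (g k - g (k+1)) := by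
    refine Finset.sum_le_sum fun k _ => ?_
    have hx : (2:ℝ) ≤ ((m+k+Cn : ℕ):ℝ) := by exact_mod_cast (by omega : 2 ≤ m+k+Cn)
    have := ineq_ub ((m+k+Cn : ℕ):ℝ) hx
    simp only [hg]
    push_cast
    push_cast at this
    refine (le_of_eq ?_).trans (this.trans (le_of_eq ?_)) <;> push_cast <;> ring
  have hgn : 0 ≤ g n := by
    have hx : (2:ℝ) ≤ ((m+n+Cn : ℕ):ℝ) := by exact_mod_cast (by omega : 2 ≤ m+n+Cn)
    have hpos : (0:ℝ) < 2*(((m+n+Cn : ℕ):ℝ)-1)*((m+n+Cn : ℕ):ℝ) := by nlinarith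
    exact le_of_lt (div_pos one_pos hpos)
  have hfin : ∑ k ∈ range n, (1:ℝ) / (((m + k + Cn) ^ 3 : ℕ) : ℝ) ≤ g 0 := by
    rw [h1] at h2; linarith
  simpa [hg] using hfin

/-! ### shaft values -/

lemma sv_zero {Cn : ℕ} {l : ℕ → ℕ} (hl : l = fun i => (i + Cn)^3) :
    shaftValue l 0 = ((l 0 : ℕ):ℝ) * tl Cn 0 := by
  subst hl
  rw [shaftValue, tl]
  congr 1
  exact tsum_congr fun k => by congr 3; omega

lemma sv_succ {Cn : ℕ} {l : ℕ → ℕ} (hl : l = fun i => (i + Cn)^3) (n : ℕ) :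
    shaftValue l (n+1) = shaftValue l n + tl Cn (n+1) := by
  subst hl
  rw [shaftValue, tl]

lemma sv_pos {Cn : ℕ} {l : ℕ → ℕ} (hl : l = fun i => (i + Cn)^3) (hC : 1 ≤ Cn) :
    ∀ n, 0 < shaftValue l n
  | 0 => by
    rw [sv_zero hl]
    have h0 : 0 < l 0 := by rw [hl]; positivity
    exact mul_pos (by exact_mod_cast h0) (tl_pos Cn 0 hC)
  | n + 1 => by
    rw [sv_succ hl]
    exact add_pos (sv_pos hl hC n) (tl_pos Cn (n+1) hC)

lemma sv_le_succ {Cn : ℕ} {l : ℕ → ℕ} (hl : l = fun i => (i + Cn)^3) (hC : 1 ≤ Cn) (n : ℕ) :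
    shaftValue l n ≤ shaftValue l (n+1) := by
  rw [sv_succ hl]
  linarith [tl_pos Cn (n+1) hC]

lemma sv_key {Cn : ℕ} {l : ℕ → ℕ} (hl : l = fun i => (i + Cn)^3) (hC : 2 ≤ Cn) :
    ∀ n, shaftValue l n ≤ ((l n : ℕ):ℝ) * tl Cn n
  | 0 => le_of_eq (sv_zero hl)
  | n + 1 => by
    have ih := sv_key hl hC n
    rw [sv_succ hl]
    have hts := tl_succ Cn n
    have hlb := tl_lb Cn (n+1) (by omega)
    set x : ℝ := ((n + Cn : ℕ):ℝ) with hx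
    have hx2 : (2:ℝ) ≤ x := by rw [hx]; exact_mod_cast (by omega : 2 ≤ n + Cn)
    have hxpos : (0:ℝ) < x := by linarith
    have hcast1 : ((l n : ℕ):ℝ) = x^3 := by rw [hl, hx]; push_cast; ring
    have hcast2 : ((l (n+1) : ℕ):ℝ) = (x+1)^3 := by rw [hl, hx]; push_cast; ring
    have hcast3 : ((n+1+Cn : ℕ):ℝ) = x + 1 := by rw [hx]; push_cast; ring
    have hcast4 : (((n+Cn)^3 : ℕ):ℝ) = x^3 := by rw [hx]; push_cast; ring
    rw [hcast2]
    rw [hcast1, hts, hcast4] at ih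
    rw [hcast3] at hlb
    set t : ℝ := tl Cn (n+1)
    have hx3 : x^3 * (1/x^3) = 1 := by field_simp
    have h1 : (1:ℝ) ≤ (3*x^2 + 3*x) * t := by
      have hfrac : (1:ℝ) ≤ (3*x^2 + 3*x) * (1/(2*(x+1)^2)) := by
        rw [mul_one_div, le_div_iff₀ (by positivity)]
        nlinarith
      have := mul_le_mul_of_nonneg_left hlb (by positivity : (0:ℝ) ≤ 3*x^2 + 3*x)
      linarith
    nlinarith [ih, h1, hx3]

lemma sv_ub {Cn : ℕ} {l : ℕ → ℕ} (hl : l = fun i => (i + Cn)^3) (hC : 2 ≤ Cn) :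
    ∀ n, shaftValue l n + 1/(2*((n+Cn : ℕ):ℝ)) ≤ shaftValue l 0 + 1/(2*(Cn:ℝ)) := by
  intro n
  induction n with
  | zero => simp
  | succ n ih =>
    have hub := tl_ub Cn (n+1) (by omega)
    set x : ℝ := ((n + Cn : ℕ):ℝ) with hx
    have hx2 : (2:ℝ) ≤ x := by rw [hx]; exact_mod_cast (by omega : 2 ≤ n + Cn)
    have hcast3 : ((n+1+Cn : ℕ):ℝ) = x + 1 := by rw [hx]; push_cast; ring
    rw [sv_succ hl, hcast3]
    rw [hcast3] at hub
    have key : tl Cn (n+1) + 1/(2*(x+1)) ≤ 1/(2*x) := by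
      have hsplit : 1/(2*(x+1-1)*(x+1)) = 1/(2*x) - 1/(2*(x+1)) := by
        have hx0 : x ≠ 0 := by linarith
        field_simp
        rw [add_sub_cancel_right, div_self hx0]; ring
      rw [hsplit] at hub
      linarith
    linarith

lemma sv_one_lt {Cn : ℕ} {l : ℕ → ℕ} (hl : l = fun i => (i + Cn)^3) (hC : 2 ≤ Cn) :
    1 < shaftValue l 0 := by
  rw [sv_zero hl, tl_succ Cn 0]
  have h0 : (0:ℝ) < ((l 0 : ℕ):ℝ) := by
    rw [hl]; have : 0 < (0+Cn)^3 := by positivity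
    exact_mod_cast this
  have hcast : (((0+Cn)^3 : ℕ):ℝ) = ((l 0 : ℕ):ℝ) := by rw [hl]
  rw [hcast]
  have ht1 : 0 < tl Cn 1 := tl_pos Cn 1 (by omega)
  have : ((l 0 : ℕ):ℝ) * (1/((l 0 : ℕ):ℝ)) = 1 := by field_simp
  nlinarith

/-! ### graph neighborhoods -/

variable {l : ℕ → ℕ}

lemma nb_tooth {n k : ℕ} (hp : k ≤ l n) (h1 : 0 < k) (h2 : k < l n) :
    {y : {p : ℕ × ℕ // p.2 ≤ l p.1} | (combGraph l).Adj ⟨(n,k), hp⟩ y} =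
      {⟨(n,k-1), by show k-1 ≤ l n; omega⟩, ⟨(n,k+1), h2⟩} := by
  ext ⟨⟨a,b⟩,hb⟩
  simp only [combGraph, SimpleGraph.fromRel_adj, Set.mem_setOf_eq, Set.mem_insert_iff,
    Set.mem_singleton_iff, Subtype.mk.injEq, Prod.mk.injEq, ne_eq, true_and, and_true]
  omega

lemma nb_shaft0 (h0 : 0 < l 0) :
    {y : {p : ℕ × ℕ // p.2 ≤ l p.1} | (combGraph l).Adj ⟨(0,0), Nat.zero_le _⟩ y} =
      {⟨(1,0), Nat.zero_le _⟩, ⟨(0,1), h0⟩} := by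
  ext ⟨⟨a,b⟩,hb⟩
  simp only [combGraph, SimpleGraph.fromRel_adj, Set.mem_setOf_eq, Set.mem_insert_iff,
    Set.mem_singleton_iff, Subtype.mk.injEq, Prod.mk.injEq, ne_eq, true_and, and_true]
  omega

lemma nb_shaft {n : ℕ} (h : 0 < l (n+1)) :
    {y : {p : ℕ × ℕ // p.2 ≤ l p.1} | (combGraph l).Adj ⟨(n+1,0), Nat.zero_le _⟩ y} =
      {⟨(n,0), Nat.zero_le _⟩, ⟨(n+2,0), Nat.zero_le _⟩, ⟨(n+1,1), h⟩} := by
  ext ⟨⟨a,b⟩,hb⟩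
  simp only [combGraph, SimpleGraph.fromRel_adj, Set.mem_setOf_eq, Set.mem_insert_iff,
    Set.mem_singleton_iff, Subtype.mk.injEq, Prod.mk.injEq, ne_eq, true_and, and_true]
  omega

lemma infLap_pair {V : Type*} (G : SimpleGraph V) (w : V → ℝ) (p q1 q2 : V)
    (hn : {y | G.Adj p y} = {q1, q2}) :
    infLap G w p = w q1 + w q2 - 2 * w p := by
  unfold infLap
  rw [hn, Set.image_pair, csInf_pair, csSup_pair, min_add_max]

lemma infLap_triple {V : Type*} (G : SimpleGraph V) (w : V → ℝ) (p q1 q2 q3 : V)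
    (hn : {y | G.Adj p y} = {q1, q2, q3}) :
    infLap G w p = min (w q1) (min (w q2) (w q3)) + max (w q1) (max (w q2) (w q3))
      - 2 * w p := by
  unfold infLap
  have hbdd : BddBelow ({w q2, w q3} : Set ℝ) :=
    (Set.finite_singleton _ |>.insert _).bddBelow
  have hbdd2 : BddAbove ({w q2, w q3} : Set ℝ) :=
    (Set.finite_singleton _ |>.insert _).bddAbove
  have hne : ({w q2, w q3} : Set ℝ).Nonempty := ⟨w q2, by simp⟩
  rw [hn, Set.image_insert_eq, Set.image_pair, csInf_insert hbdd hne, csInf_pair,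
    csSup_insert hbdd2 hne, csSup_pair]

end Stmt17Aux

open Stmt17Aux in
/-- Multiple bounded solutions on the comb graph with tooth lengths `l n = (n+C)³`, `C ≥ 2`:
both `u(n,k) = (l_n-k)/l_n` and `v(n,k) = ((l_n-k)/l_n)·v(n,0)` (with the shaft values defined
recursively) are bounded solutions of `Δ∞ · = -f` for `k < l n` with value `0` at `k = l n`,
where `f(n,0) = 1/l_n`, `f(n,k) = 0` for `0 < k < l n`; and `u ≠ v`. -/
theorem stmt_17 (Cn : ℕ) (hC : 2 ≤ Cn) :
    let l : ℕ → ℕ := fun n => (n + Cn) ^ 3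
    let u : {p : ℕ × ℕ // p.2 ≤ l p.1} → ℝ :=
      fun p => ((l p.1.1 : ℝ) - p.1.2) / (l p.1.1 : ℝ)
    let v : {p : ℕ × ℕ // p.2 ≤ l p.1} → ℝ :=
      fun p => (((l p.1.1 : ℝ) - p.1.2) / (l p.1.1 : ℝ)) * shaftValue l p.1.1
    let f : {p : ℕ × ℕ // p.2 ≤ l p.1} → ℝ :=
      fun p => if p.1.2 = 0 then 1 / (l p.1.1 : ℝ) else 0
    (∃ M, ∀ p, |u p| ≤ M) ∧ (∃ M, ∀ p, |v p| ≤ M) ∧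
    (∀ p : {p : ℕ × ℕ // p.2 ≤ l p.1}, p.1.2 < l p.1.1 →
      infLap (combGraph l) u p = -(f p) ∧ infLap (combGraph l) v p = -(f p)) ∧
    (∀ p : {p : ℕ × ℕ // p.2 ≤ l p.1}, p.1.2 = l p.1.1 → u p = 0 ∧ v p = 0) ∧
    u ≠ v := by
  intro l u v f
  have hl : l = (fun n => (n + Cn) ^ 3) := rfl
  have hC1 : 1 ≤ Cn := by omega
  have hlpos : ∀ n, (0:ℝ) < (l n : ℝ) := by
    intro n
    have : 0 < l n := by rw [hl]; positivity
    exact_mod_cast this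
  have hSpos : ∀ n, 0 < shaftValue l n := sv_pos hl hC1
  refine ⟨⟨1, ?_⟩, ⟨shaftValue l 0 + 1, ?_⟩, ?_, ?_, ?_⟩
  · -- |u| ≤ 1
    rintro ⟨⟨n,k⟩,hk⟩
    show |((l n : ℝ) - (k:ℕ))/(l n : ℝ)| ≤ 1
    have h1 : ((k:ℕ):ℝ) ≤ (l n : ℝ) := by exact_mod_cast hk
    have h2 : (0:ℝ) ≤ ((k:ℕ):ℝ) := by positivity
    rw [abs_of_nonneg (div_nonneg (by linarith) (hlpos n).le), div_le_one (hlpos n)]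
    linarith
  · -- |v| ≤ S 0 + 1
    rintro ⟨⟨n,k⟩,hk⟩
    show |((l n : ℝ) - (k:ℕ))/(l n : ℝ) * shaftValue l n| ≤ shaftValue l 0 + 1
    have h1 : ((k:ℕ):ℝ) ≤ (l n : ℝ) := by exact_mod_cast hk
    have h2 : (0:ℝ) ≤ ((k:ℕ):ℝ) := by positivity
    have hq0 : (0:ℝ) ≤ ((l n : ℝ) - (k:ℕ))/(l n : ℝ) :=
      div_nonneg (by linarith) (hlpos n).le
    have hq1 : ((l n : ℝ) - (k:ℕ))/(l n : ℝ) ≤ 1 := by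
      rw [div_le_one (hlpos n)]; linarith
    have hub := sv_ub hl hC n
    have ha : (0:ℝ) ≤ 1/(2*((n+Cn : ℕ):ℝ)) := by positivity
    have hb : 1/(2*(Cn:ℝ)) ≤ 1 := by
      rw [div_le_one (by positivity)]
      have : (2:ℝ) ≤ (Cn:ℝ) := by exact_mod_cast hC
      linarith
    have hS : shaftValue l n ≤ shaftValue l 0 + 1 := by linarith
    rw [abs_of_nonneg (mul_nonneg hq0 (hSpos n).le)]
    calc ((l n : ℝ) - (k:ℕ))/(l n : ℝ) * shaftValue l n
        ≤ 1 * shaftValue l n := mul_le_mul_of_nonneg_right hq1 (hSpos n).le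
      _ ≤ shaftValue l 0 + 1 := by rw [one_mul]; exact hS
  · -- the PDE
    rintro ⟨⟨n,k⟩,hk⟩ hlt
    have hkl : k < l n := hlt
    rcases Nat.eq_zero_or_pos k with hk0 | hkpos
    · subst hk0
      rcases n with _ | m
      · -- n = 0, k = 0
        have hnb := nb_shaft0 (l := l) (by rw [hl]; positivity)
        constructor
        · rw [infLap_pair _ u _ _ _ hnb]
          show ((l 1 : ℝ) - ((0:ℕ):ℝ))/(l 1 : ℝ) + ((l 0 : ℝ) - ((1:ℕ):ℝ))/(l 0 : ℝ)
            - 2 * (((l 0 : ℝ) - ((0:ℕ):ℝ))/(l 0 : ℝ))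
            = -(if (0:ℕ) = 0 then 1/(l 0 : ℝ) else 0)
          rw [if_pos rfl]
          have h0 := (hlpos 0).ne'
          have h1 := (hlpos 1).ne'
          push_cast
          field_simp
          ring
        · rw [infLap_pair _ v _ _ _ hnb]
          show ((l 1 : ℝ) - ((0:ℕ):ℝ))/(l 1 : ℝ) * shaftValue l 1
            + ((l 0 : ℝ) - ((1:ℕ):ℝ))/(l 0 : ℝ) * shaftValue l 0
            - 2 * (((l 0 : ℝ) - ((0:ℕ):ℝ))/(l 0 : ℝ) * shaftValue l 0)
            = -(if (0:ℕ) = 0 then 1/(l 0 : ℝ) else 0)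
          rw [if_pos rfl]
          have h0 := (hlpos 0).ne'
          have h1 := (hlpos 1).ne'
          have hS1 : shaftValue l 1 = shaftValue l 0 + tl Cn 1 := sv_succ hl 0
          have hS0 : shaftValue l 0 = ((l 0 : ℕ):ℝ) * tl Cn 0 := sv_zero hl
          have ht0 : tl Cn 0 = 1/(((0+Cn)^3 : ℕ) : ℝ) + tl Cn 1 := tl_succ Cn 0
          have hc : (((0+Cn)^3 : ℕ) : ℝ) = (l 0 : ℝ) := by rw [hl]
          rw [hc] at ht0
          have ht0' : tl Cn 0 * (l 0 : ℝ) = 1 + tl Cn 1 * (l 0 : ℝ) := by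
            rw [ht0]; field_simp
          push_cast
          field_simp
          linear_combination ((l 1 : ℝ) * (l 0 : ℝ)) * hS1 - (l 1 : ℝ) * hS0 - (l 1 : ℝ) * ht0'
      · -- n = m+1, k = 0
        have hnb := nb_shaft (l := l) (n := m) (by rw [hl]; positivity)
        constructor
        · rw [infLap_triple _ u _ _ _ _ hnb]
          show min (((l m : ℝ) - ((0:ℕ):ℝ))/(l m : ℝ))
              (min (((l (m+2) : ℝ) - ((0:ℕ):ℝ))/(l (m+2) : ℝ))
                (((l (m+1) : ℝ) - ((1:ℕ):ℝ))/(l (m+1) : ℝ)))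
            + max (((l m : ℝ) - ((0:ℕ):ℝ))/(l m : ℝ))
              (max (((l (m+2) : ℝ) - ((0:ℕ):ℝ))/(l (m+2) : ℝ))
                (((l (m+1) : ℝ) - ((1:ℕ):ℝ))/(l (m+1) : ℝ)))
            - 2 * (((l (m+1) : ℝ) - ((0:ℕ):ℝ))/(l (m+1) : ℝ))
            = -(if (0:ℕ) = 0 then 1/(l (m+1) : ℝ) else 0)
          rw [if_pos rfl]
          push_cast
          have A1 : ((l m : ℝ) - 0)/(l m : ℝ) = 1 := by
            rw [sub_zero, div_self (hlpos m).ne']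
          have A2 : ((l (m+2) : ℝ) - 0)/(l (m+2) : ℝ) = 1 := by
            rw [sub_zero, div_self (hlpos (m+2)).ne']
          have A0 : ((l (m+1) : ℝ) - 0)/(l (m+1) : ℝ) = 1 := by
            rw [sub_zero, div_self (hlpos (m+1)).ne']
          have hc1 : ((l (m+1) : ℝ) - 1)/(l (m+1) : ℝ) ≤ 1 := by
            rw [div_le_one (hlpos (m+1))]; linarith
          rw [A1, A2, A0, min_eq_right hc1, min_eq_right hc1, max_eq_left hc1, max_self]
          field_simp
          ring
        · rw [infLap_triple _ v _ _ _ _ hnb]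
          show min (((l m : ℝ) - ((0:ℕ):ℝ))/(l m : ℝ) * shaftValue l m)
              (min (((l (m+2) : ℝ) - ((0:ℕ):ℝ))/(l (m+2) : ℝ) * shaftValue l (m+2))
                (((l (m+1) : ℝ) - ((1:ℕ):ℝ))/(l (m+1) : ℝ) * shaftValue l (m+1)))
            + max (((l m : ℝ) - ((0:ℕ):ℝ))/(l m : ℝ) * shaftValue l m)
              (max (((l (m+2) : ℝ) - ((0:ℕ):ℝ))/(l (m+2) : ℝ) * shaftValue l (m+2))
                (((l (m+1) : ℝ) - ((1:ℕ):ℝ))/(l (m+1) : ℝ) * shaftValue l (m+1)))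
            - 2 * (((l (m+1) : ℝ) - ((0:ℕ):ℝ))/(l (m+1) : ℝ) * shaftValue l (m+1))
            = -(if (0:ℕ) = 0 then 1/(l (m+1) : ℝ) else 0)
          rw [if_pos rfl]
          push_cast
          have A1 : ((l m : ℝ) - 0)/(l m : ℝ) = 1 := by
            rw [sub_zero, div_self (hlpos m).ne']
          have A2 : ((l (m+2) : ℝ) - 0)/(l (m+2) : ℝ) = 1 := by
            rw [sub_zero, div_self (hlpos (m+2)).ne']
          have A0 : ((l (m+1) : ℝ) - 0)/(l (m+1) : ℝ) = 1 := by
            rw [sub_zero, div_self (hlpos (m+1)).ne']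
          rw [A1, A2, A0, one_mul, one_mul, one_mul]
          have hs1 := sv_succ hl m
          have hs2 := sv_succ hl (m+1)
          have hkey := sv_key hl hC (m+1)
          have ht := tl_succ Cn (m+1)
          have hcast : (((m+1+Cn)^3 : ℕ) : ℝ) = (l (m+1) : ℝ) := by rw [hl]
          rw [hcast] at ht
          have hcastk : ((l (m+1) : ℕ):ℝ) = (l (m+1) : ℝ) := rfl
          have hAB : shaftValue l m ≤ shaftValue l (m+2) := by
            have := sv_le_succ hl hC1 m
            have := sv_le_succ hl hC1 (m+1)
            linarith
          have hAC : shaftValue l m ≤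
              ((l (m+1) : ℝ) - 1)/(l (m+1) : ℝ) * shaftValue l (m+1) := by
            rw [div_mul_eq_mul_div, le_div_iff₀ (hlpos (m+1))]
            nlinarith [hkey, hs1, hSpos (m+1), tl_pos Cn (m+1) hC1]
          have hCB : ((l (m+1) : ℝ) - 1)/(l (m+1) : ℝ) * shaftValue l (m+1)
              ≤ shaftValue l (m+2) := by
            have hc1 : ((l (m+1) : ℝ) - 1)/(l (m+1) : ℝ) ≤ 1 := by
              rw [div_le_one (hlpos (m+1))]; linarith
            have h2 := mul_le_mul_of_nonneg_right hc1 (hSpos (m+1)).le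
            have h3 := sv_le_succ hl hC1 (m+1)
            linarith
          rw [min_eq_left (le_min hAB hAC), max_eq_left hCB, max_eq_right hAB]
          have hs2' : shaftValue l (m+2) = shaftValue l (m+1) + tl Cn (m+2) := hs2
          have ht' : tl Cn (m+1) = 1 / (l (m+1) : ℝ) + tl Cn (m+2) := ht
          linarith [hs1, hs2', ht']
    · -- 0 < k < l n
      have hnb := nb_tooth (l := l) hk hkpos hkl
      constructor
      · rw [infLap_pair _ u _ _ _ hnb]
        show ((l n : ℝ) - ((k-1:ℕ):ℝ))/(l n : ℝ) + ((l n : ℝ) - ((k+1:ℕ):ℝ))/(l n : ℝ)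
          - 2 * (((l n : ℝ) - ((k:ℕ):ℝ))/(l n : ℝ))
          = -(if k = 0 then 1/(l n : ℝ) else 0)
        rw [if_neg (by omega)]
        have h0 := (hlpos n).ne'
        rw [Nat.cast_sub hkpos]
        push_cast
        field_simp
        ring
      · rw [infLap_pair _ v _ _ _ hnb]
        show ((l n : ℝ) - ((k-1:ℕ):ℝ))/(l n : ℝ) * shaftValue l n
          + ((l n : ℝ) - ((k+1:ℕ):ℝ))/(l n : ℝ) * shaftValue l n
          - 2 * (((l n : ℝ) - ((k:ℕ):ℝ))/(l n : ℝ) * shaftValue l n)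
          = -(if k = 0 then 1/(l n : ℝ) else 0)
        rw [if_neg (by omega)]
        have h0 := (hlpos n).ne'
        rw [Nat.cast_sub hkpos]
        push_cast
        field_simp
        ring
  · -- boundary
    rintro ⟨⟨n,k⟩,hk⟩ hb
    have hb' : k = l n := hb
    subst hb'
    constructor
    · show ((l n : ℝ) - ((l n : ℕ):ℝ))/(l n : ℝ) = 0
      rw [sub_self, zero_div]
    · show ((l n : ℝ) - ((l n : ℕ):ℝ))/(l n : ℝ) * shaftValue l n = 0
      rw [sub_self, zero_div, zero_mul]
  · -- u ≠ v
    intro heq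
    have h1 := congrFun heq ⟨(0,0), Nat.zero_le _⟩
    have hu1 : u ⟨(0,0), Nat.zero_le _⟩ = 1 := by
      show ((l 0 : ℝ) - ((0:ℕ):ℝ))/(l 0 : ℝ) = 1
      rw [Nat.cast_zero, sub_zero, div_self (hlpos 0).ne']
    have hv1 : v ⟨(0,0), Nat.zero_le _⟩ = shaftValue l 0 := by
      show ((l 0 : ℝ) - ((0:ℕ):ℝ))/(l 0 : ℝ) * shaftValue l 0 = shaftValue l 0
      rw [Nat.cast_zero, sub_zero, div_self (hlpos 0).ne', one_mul]
    rw [hu1, hv1] at h1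
    have := sv_one_lt hl hC
    linarith
end
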